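/- arXiv:2304.04114 — 8 statements merged into one kernel-verified Lean document; each statement's English description precedes it below -/
import Mathlib

section
/- In a right ℓ-group G with arrow operation x → y := (y x⁻¹) ∧ e on G⁻, the following hold for all x, y, z ∈ G⁻: (x → y)x = x ∧ y; (x ∧ y) → z = (x → y) → (x → z); x → (y ∧ z) = (x → y) ∧ (x → z); xy → z = x → (y → z); x → yz = ((z → x) → y)(x → z); and x → y = e if and only if x ≤ y. -/
/-- The arrow operation `x → y := (y * x⁻¹) ⊓ 1` on the negative cone of a right ℓ-group. -/
def arr {G : Type*} [Lattice G] [Group G] (x y : G) : G := (y * x⁻¹) ⊓ 1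

section aux
variable {G : Type*} [Lattice G] [Group G]
  [CovariantClass G G (Function.swap (· * ·)) (· ≤ ·)]

lemma inf_mul_right' (a b c : G) : (a ⊓ b) * c = a * c ⊓ b * c :=
  (OrderIso.mulRight c).map_inf a b

lemma arr_eq (x y : G) : arr x y = (x ⊓ y) * x⁻¹ := by
  rw [arr, inf_mul_right', mul_inv_cancel, inf_comm]

end aux

/-- Identities for the arrow operation on the negative cone of a right ℓ-group. -/
theorem equations_for_arrow {G : Type*} [Lattice G] [Group G]
    [CovariantClass G G (Function.swap (· * ·)) (· ≤ ·)]
    (x y z : G) (hx : x ≤ 1) (hy : y ≤ 1) (hz : z ≤ 1) :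
    arr x y * x = x ⊓ y ∧
    arr (x ⊓ y) z = arr (arr x y) (arr x z) ∧
    arr x (y ⊓ z) = arr x y ⊓ arr x z ∧
    arr (x * y) z = arr x (arr y z) ∧
    arr x (y * z) = arr (arr z x) y * arr x z ∧
    (arr x y = 1 ↔ x ≤ y) := by
  refine ⟨?_, ?_, ?_, ?_, ?_, ?_⟩
  · rw [arr_eq, inv_mul_cancel_right]
  · simp only [arr_eq]
    rw [← inf_mul_right']
    have key : (x ⊓ y) ⊓ (x ⊓ z) = x ⊓ y ⊓ z := by
      rw [← inf_inf_distrib_left, ← inf_assoc]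
    rw [key]; group
  · simp only [arr_eq, ← inf_mul_right']
    congr 1
    exact inf_inf_distrib_left x y z
  · have hxy : x * y ≤ y := le_of_le_of_eq (mul_le_mul_left hx y) (one_mul y)
    have h1 : x * y ⊓ (y ⊓ z) = x * y ⊓ z := by
      rw [← inf_assoc, inf_eq_left.mpr hxy]
    simp only [arr_eq]
    have h2 : (x * y ⊓ (y ⊓ z)) * y⁻¹ = x ⊓ (y ⊓ z) * y⁻¹ := by
      rw [inf_mul_right', mul_inv_cancel_right]
    rw [← h2, h1]; group
  · have hyz : y * z ≤ z := le_of_le_of_eq (mul_le_mul_left hy z) (one_mul z)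
    simp only [arr_eq]
    rw [inf_comm z x]
    have h3 : ((x ⊓ z) ⊓ y * z) * z⁻¹ = (x ⊓ z) * z⁻¹ ⊓ y := by
      rw [inf_mul_right', mul_inv_cancel_right]
    have h4 : (x ⊓ z) ⊓ y * z = x ⊓ y * z := by
      rw [inf_assoc, inf_eq_right.mpr hyz]
    rw [← h3, h4]; group
  · rw [arr_eq, mul_inv_eq_one, inf_eq_left]
end

section
/- Let G be a right ℓ-group and s ∈ G⁺ a strong order unit. Then each element g ∈ G⁻ has a unique right-normal factorization g = g_k g_{k-1} ⋯ g₁ where k = min{i ≥ 0 : g ≥ s^{-i}}, given by g_i = (g ∨ s^{-i})(g ∨ s^{-(i-1)})^{-1}; each g_i lies in [s^{-1}, e] \ {e}, and the factorization is right-maximal, i.e., s^{-1} g_i^{-1} ∨ g_{i+1} = e for 1 ≤ i < k. -/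
/-- An element `s` of a right ℓ-group is normal if left multiplication by `s` preserves
the lattice operations. -/
def IsNormal {G : Type*} [Lattice G] [Group G] (s : G) : Prop :=
  ∀ x y : G, s * (x ⊓ y) = s * x ⊓ s * y ∧ s * (x ⊔ y) = s * x ⊔ s * y

/-- A strong order unit: a normal element `s > 1` such that every `g` satisfies
`g ≤ sⁿ` for some integer `n`. -/
def IsStrongOrderUnit {G : Type*} [Lattice G] [Group G] (s : G) : Prop :=
  1 < s ∧ IsNormal s ∧ ∀ g : G, ∃ n : ℤ, g ≤ s ^ n

/-- `l = [g_k, …, g_1]` is a right-normal factorization of `g`: `g = g_k ⋯ g₁`, each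
factor lies in `[s⁻¹, 1] \ {1}`, and no factor `g_{i+1}` splits off a nontrivial right
divisor `h` with `h * g_i ∈ [s⁻¹, 1]`. -/
def IsRightNormalFactorization {G : Type*} [Lattice G] [Group G] (s g : G)
    (l : List G) : Prop :=
  g = l.prod ∧
  (∀ a ∈ l, s⁻¹ ≤ a ∧ a ≤ 1 ∧ a ≠ 1) ∧
  ∀ j : ℕ, ∀ hj : j + 1 < l.length,
    ¬ ∃ h h' : G, h ≤ 1 ∧ h' ≤ 1 ∧ h ≠ 1 ∧
      h' * h = l.get ⟨j, Nat.lt_of_succ_lt hj⟩ ∧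
      s⁻¹ ≤ h * l.get ⟨j + 1, hj⟩ ∧ h * l.get ⟨j + 1, hj⟩ ≤ 1

section Helpers
set_option linter.unusedSectionVars false
variable {G : Type*} [Lattice G] [Group G]
  [CovariantClass G G (Function.swap (· * ·)) (· ≤ ·)] {s : G}

lemma rnf_inv_mul_sup (hn : IsNormal s) (x y : G) :
    s⁻¹ * (x ⊔ y) = s⁻¹ * x ⊔ s⁻¹ * y := by
  have h := (hn (s⁻¹ * x) (s⁻¹ * y)).2
  rw [mul_inv_cancel_left, mul_inv_cancel_left] at h
  rw [← h, inv_mul_cancel_left]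

lemma rnf_inv_mul_mono (hn : IsNormal s) {x y : G} (h : x ≤ y) :
    s⁻¹ * x ≤ s⁻¹ * y := by
  have h2 := rnf_inv_mul_sup hn x y
  rw [sup_eq_right.2 h] at h2
  rw [h2]; exact le_sup_left

lemma rnf_pow_inv_mul_sup (hn : IsNormal s) (n : ℕ) (x y : G) :
    s⁻¹ ^ n * (x ⊔ y) = s⁻¹ ^ n * x ⊔ s⁻¹ ^ n * y := by
  induction n with
  | zero => simp
  | succ n ih =>
    rw [pow_succ', mul_assoc, ih, rnf_inv_mul_sup hn, mul_assoc, mul_assoc]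

lemma rnf_pow_inv_mul_mono (hn : IsNormal s) (n : ℕ) {x y : G} (h : x ≤ y) :
    s⁻¹ ^ n * x ≤ s⁻¹ ^ n * y := by
  have h2 := rnf_pow_inv_mul_sup hn n x y
  rw [sup_eq_right.2 h] at h2
  rw [h2]; exact le_sup_left

lemma rnf_one_le_pow (h1 : 1 ≤ s) (n : ℕ) : 1 ≤ s ^ n := by
  induction n with
  | zero => simp
  | succ n ih =>
    calc (1:G) ≤ s := h1
    _ = 1 * s := (one_mul s).symm
    _ ≤ s ^ n * s := mul_le_mul_left ih s
    _ = s ^ (n+1) := (pow_succ s n).symm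

lemma rnf_pow_inv_le_one (h1 : 1 ≤ s) (n : ℕ) : s⁻¹ ^ n ≤ 1 := by
  have h2 := mul_le_mul_left (rnf_one_le_pow h1 n) (s ^ n)⁻¹
  rw [one_mul, mul_inv_cancel] at h2
  rw [inv_pow]; exact h2

lemma rnf_zpow_le_zpow (h1 : 1 ≤ s) {m n : ℤ} (h : m ≤ n) : s ^ m ≤ s ^ n := by
  have h0 : (1:G) ≤ s ^ (n - m) := by
    obtain ⟨d, hd⟩ : ∃ d : ℕ, n - m = (d : ℤ) := ⟨(n - m).toNat, by omega⟩
    rw [hd, zpow_natCast]; exact rnf_one_le_pow h1 d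
  calc s ^ m = 1 * s ^ m := (one_mul _).symm
  _ ≤ s ^ (n - m) * s ^ m := mul_le_mul_left h0 _
  _ = s ^ n := by rw [← zpow_add]; ring_nf

lemma rnf_inv_le_one (h1 : 1 ≤ s) : s⁻¹ ≤ 1 := by
  have := mul_le_mul_left h1 s⁻¹
  rwa [one_mul, mul_inv_cancel] at this

/-- Fixed point lemma: if `x = a ⊔ s⁻¹ x` then `x = a`. -/
lemma rnf_fix (hs : IsStrongOrderUnit s) {a x : G} (h : x = a ⊔ s⁻¹ * x) : x = a := by
  obtain ⟨hs1, hn, harch⟩ := hs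
  have ha_le : a ≤ x := h ▸ le_sup_left
  have hstep : ∀ n : ℕ, x = a ⊔ s⁻¹ ^ n * x := by
    intro n
    induction n with
    | zero => rw [pow_zero, one_mul, sup_eq_right.2 ha_le]
    | succ n ih =>
      have h2 : s⁻¹ ^ n * x = s⁻¹ ^ n * a ⊔ s⁻¹ ^ (n+1) * x := by
        conv_lhs => rw [h]
        rw [rnf_pow_inv_mul_sup hn, pow_succ, mul_assoc]
      have h3 : s⁻¹ ^ n * a ≤ a := by
        have := mul_le_mul_left (rnf_pow_inv_le_one hs1.le n) a
        rwa [one_mul] at this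
      calc x = a ⊔ s⁻¹ ^ n * x := ih
      _ = a ⊔ (s⁻¹ ^ n * a ⊔ s⁻¹ ^ (n+1) * x) := by rw [← h2]
      _ = (a ⊔ s⁻¹ ^ n * a) ⊔ s⁻¹ ^ (n+1) * x := (sup_assoc ..).symm
      _ = a ⊔ s⁻¹ ^ (n+1) * x := by rw [sup_eq_left.2 h3]
  obtain ⟨m, hm⟩ := harch (x * a⁻¹)
  set n := m.toNat with hn'
  have h2 : x * a⁻¹ ≤ s ^ n := by
    have := rnf_zpow_le_zpow hs1.le (show m ≤ (n : ℤ) by omega)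
    rw [zpow_natCast] at this
    exact hm.trans this
  have h3 : x ≤ s ^ n * a := by
    have := mul_le_mul_left h2 a
    rwa [inv_mul_cancel_right] at this
  have h4 : s⁻¹ ^ n * x ≤ a := by
    rw [inv_pow]
    have := rnf_pow_inv_mul_mono hn n h3
    rwa [inv_pow, inv_mul_cancel_left] at this
  rw [hstep n, sup_eq_left.2 h4]

/-- Suffix products of a right-maximal factorization. -/
lemma rnf_suffix_prod (hs : IsStrongOrderUnit s) :
    ∀ l : List G, (∀ a ∈ l, s⁻¹ ≤ a ∧ a ≤ 1) →
    (∀ j : ℕ, ∀ hj : j + 1 < l.length,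
      s⁻¹ * (l.get ⟨j+1, hj⟩)⁻¹ ⊔ l.get ⟨j, Nat.lt_of_succ_lt hj⟩ = 1) →
    ∀ i : ℕ, i ≤ l.length → (l.drop (l.length - i)).prod = l.prod ⊔ s ^ (-(i : ℤ))
  | [] => by
      intro _ _ i hi
      simp only [List.length_nil, Nat.le_zero] at hi
      subst hi
      simp
  | [a] => by
      intro hmem _ i hi
      obtain ⟨ha1, ha2⟩ := hmem a (by simp)
      simp only [List.length_singleton] at hi
      interval_cases i
      · simpa using ha2
      · simp only [List.length_singleton, Nat.sub_self, List.drop_zero, List.prod_cons,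
          List.prod_nil, mul_one, Nat.cast_one]
        rw [zpow_neg, zpow_one, sup_eq_left.2 ha1]
  | a :: b :: t => by
      intro hmem hmax i hi
      obtain ⟨hs1, hn, harch⟩ := hs
      have hmem' : ∀ x ∈ b :: t, s⁻¹ ≤ x ∧ x ≤ 1 := fun x hx => hmem x (by simp [hx])
      have hmax' : ∀ j : ℕ, ∀ hj : j + 1 < (b :: t).length,
          s⁻¹ * ((b :: t).get ⟨j+1, hj⟩)⁻¹ ⊔ (b :: t).get ⟨j, Nat.lt_of_succ_lt hj⟩ = 1 := by
        intro j hj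
        exact hmax (j+1) (by simp at hj ⊢; omega)
      have IH := rnf_suffix_prod ⟨hs1, hn, harch⟩ (b :: t) hmem' hmax'
      set g' := (b :: t).prod with hg'
      have h1 : t.prod = g' ⊔ s ^ (-(t.length : ℤ)) := by
        have h := IH t.length (by simp)
        simpa using h
      have hmax0 : s⁻¹ * b⁻¹ ⊔ a = 1 := hmax 0 (by simp)
      have h2 : s⁻¹ * t.prod ⊔ a * g' = g' := by
        have h := congrArg (· * g') hmax0
        simp only [sup_mul, one_mul] at h
        have e : s⁻¹ * b⁻¹ * g' = s⁻¹ * t.prod := by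
          rw [hg', List.prod_cons, mul_assoc, inv_mul_cancel_left]
        rwa [e] at h
      have h3 : g' = (a * g' ⊔ s ^ (-(t.length : ℤ) - 1)) ⊔ s⁻¹ * g' := by
        have einv : s⁻¹ * s ^ (-(t.length : ℤ)) = s ^ (-(t.length : ℤ) - 1) := by
          rw [← zpow_neg_one, ← zpow_add]; ring_nf
        conv_lhs => rw [← h2, h1, rnf_inv_mul_sup hn, einv]
        ac_rfl
      have key : g' = a * g' ⊔ s ^ (-(t.length : ℤ) - 1) :=
        rnf_fix ⟨hs1, hn, harch⟩ h3
      have hlen : (a :: b :: t).length = t.length + 2 := by simp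
      have hprodl : (a :: b :: t).prod = a * g' := by
        rw [List.prod_cons]
      rcases Nat.lt_or_ge i (t.length + 2) with hcase | hcase
      · have hi' : i ≤ (b :: t).length := by simp; omega
        have hdrop : (a :: b :: t).drop ((a :: b :: t).length - i)
            = (b :: t).drop ((b :: t).length - i) := by
          rw [hlen, show t.length + 2 - i = ((b :: t).length - i) + 1 by
            simp only [List.length_cons]; omega]
          rw [List.drop_succ_cons]
        rw [hdrop, IH i hi', hprodl]
        conv_lhs => rw [key]
        have hle : s ^ (-(t.length : ℤ) - 1) ≤ s ^ (-(i : ℤ)) :=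
          rnf_zpow_le_zpow hs1.le (by omega)
        rw [sup_assoc, sup_eq_right.2 hle]
      · have hieq : i = t.length + 2 := by
          rw [hlen] at hi; omega
        subst hieq
        rw [hlen, Nat.sub_self, List.drop_zero, hprodl]
        have hge : s ^ (-((t.length + 2 : ℕ) : ℤ)) ≤ a * g' := by
          have hag : s⁻¹ * g' ≤ a * g' := mul_le_mul_left (hmem a (by simp)).1 g'
          have hg'ge : s ^ (-(t.length : ℤ) - 1) ≤ g' := key ▸ le_sup_right
          have h5 := rnf_inv_mul_mono hn hg'ge
          have einv : s⁻¹ * s ^ (-(t.length : ℤ) - 1) = s ^ (-((t.length + 2 : ℕ) : ℤ)) := by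
            rw [← zpow_neg_one, ← zpow_add]
            congr 1
            push_cast; ring
          rw [einv] at h5
          exact h5.trans hag
        exact (sup_eq_left.2 hge).symm
end Helpers

/-- In a right ℓ-group with strong order unit `s`, each `g ≤ 1` has a unique right-normal
factorization `g = g_k ⋯ g₁` with `k = min {i : s^{-i} ≤ g}` and
`g_i = (g ⊔ s^{-i}) (g ⊔ s^{-(i-1)})⁻¹`; it is right-maximal: `s⁻¹ g_i⁻¹ ⊔ g_{i+1} = 1`. -/
theorem right_normal_facs_exist_and_unique {G : Type*} [Lattice G] [Group G]
    [CovariantClass G G (Function.swap (· * ·)) (· ≤ ·)]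
    (s : G) (hs : IsStrongOrderUnit s) (g : G) (hg : g ≤ 1)
    (k : ℕ) (hk : s ^ (-(k : ℤ)) ≤ g) (hkmin : ∀ j : ℕ, j < k → ¬ s ^ (-(j : ℤ)) ≤ g) :
    IsRightNormalFactorization s g
      ((List.range k).map (fun j =>
        (g ⊔ s ^ (-((k - j : ℕ) : ℤ))) * (g ⊔ s ^ (-((k - j : ℕ) : ℤ) + 1))⁻¹)) ∧
    (∀ l : List G, IsRightNormalFactorization s g l →
      l = (List.range k).map (fun j =>
        (g ⊔ s ^ (-((k - j : ℕ) : ℤ))) * (g ⊔ s ^ (-((k - j : ℕ) : ℤ) + 1))⁻¹)) ∧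
    (∀ i : ℕ, 1 ≤ i → i < k →
      s⁻¹ * ((g ⊔ s ^ (-(i : ℤ))) * (g ⊔ s ^ (-(i : ℤ) + 1))⁻¹)⁻¹ ⊔
        (g ⊔ s ^ (-(i : ℤ) - 1)) * (g ⊔ s ^ (-(i : ℤ)))⁻¹ = 1) := by
  obtain ⟨hs1, hn, harch⟩ := hs
  set q : ℕ → G := fun i => g ⊔ s ^ (-(i : ℤ)) with hq
  set F : ℕ → G := fun j =>
    (g ⊔ s ^ (-((k - j : ℕ) : ℤ))) * (g ⊔ s ^ (-((k - j : ℕ) : ℤ) + 1))⁻¹ with hFdef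
  have hsle : s⁻¹ ≤ 1 := rnf_inv_le_one hs1.le
  have hq0 : q 0 = 1 := by
    simp only [hq, Nat.cast_zero, neg_zero, zpow_zero]
    exact sup_eq_right.2 hg
  have hqk : q k = g := by
    simp only [hq]
    exact sup_eq_left.2 hk
  have hsg : s⁻¹ * g ≤ g := by
    have := mul_le_mul_left hsle g
    rwa [one_mul] at this
  have hqrec : ∀ i : ℕ, q (i + 1) = g ⊔ s⁻¹ * q i := by
    intro i
    have e : s⁻¹ * s ^ (-(i : ℤ)) = s ^ (-((i + 1 : ℕ) : ℤ)) := by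
      rw [← zpow_neg_one, ← zpow_add]
      congr 1
      push_cast; ring
    simp only [hq]
    rw [rnf_inv_mul_sup hn, e, ← sup_assoc, sup_eq_left.2 hsg]
  have hg_le_q : ∀ i, g ≤ q i := by
    intro i; simp only [hq]; exact le_sup_left
  have hq_pow : ∀ i : ℕ, s ^ (-(i : ℤ)) ≤ q i := by
    intro i; simp only [hq]; exact le_sup_right
  have hq_anti : ∀ i, q (i + 1) ≤ q i := by
    intro i
    rw [hqrec i]
    refine sup_le (hg_le_q i) ?_
    have := mul_le_mul_left hsle (q i)
    rwa [one_mul] at this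
  have hq_lb : ∀ i, s⁻¹ * q i ≤ q (i + 1) := by
    intro i; rw [hqrec i]; exact le_sup_right
  have hmaxcore : ∀ i : ℕ,
      s⁻¹ * (q (i + 1) * (q i)⁻¹)⁻¹ ⊔ q (i + 2) * (q (i + 1))⁻¹ = 1 := by
    intro i
    have e1 : s⁻¹ * (q (i + 1) * (q i)⁻¹)⁻¹ = (s⁻¹ * q i) * (q (i + 1))⁻¹ := by
      rw [mul_inv_rev, inv_inv, ← mul_assoc]
    rw [e1, ← sup_mul]
    have e2 : s⁻¹ * q i ⊔ q (i + 2) = q (i + 1) := by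
      rw [show i + 2 = (i + 1) + 1 from rfl, hqrec (i + 1), sup_left_comm,
        ← rnf_inv_mul_sup hn, sup_eq_left.2 (hq_anti i), ← hqrec i]
    rw [e2, mul_inv_cancel]
  have hF' : ∀ j, j < k → F j = q (k - j) * (q (k - j - 1))⁻¹ := by
    intro j hj
    have e : (-((k - j : ℕ) : ℤ) + 1) = -((k - j - 1 : ℕ) : ℤ) := by omega
    simp only [hFdef, hq, e]
  have htel : ∀ m : ℕ,
      ((List.range m).map (fun j => q (m - j) * (q (m - j - 1))⁻¹)).prod
        = q m * (q 0)⁻¹ := by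
    intro m
    induction m with
    | zero => simp
    | succ m ih =>
      rw [List.range_succ_eq_map, List.map_cons, List.map_map]
      have e : ((fun j => q (m + 1 - j) * (q (m + 1 - j - 1))⁻¹) ∘ Nat.succ)
          = fun j => q (m - j) * (q (m - j - 1))⁻¹ := by
        funext j
        simp [Function.comp, Nat.succ_sub_succ]
      rw [e, List.prod_cons, ih, Nat.sub_zero, Nat.add_sub_cancel]
      group
  have hLmap : (List.range k).map F
      = (List.range k).map (fun j => q (k - j) * (q (k - j - 1))⁻¹) :=
    List.map_congr_left fun j hj => hF' j (List.mem_range.mp hj)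
  have hprod : ((List.range k).map F).prod = g := by
    rw [hLmap, htel k, hqk, hq0, inv_one, mul_one]
  have hfac : ∀ j, j < k → s⁻¹ ≤ F j ∧ F j ≤ 1 ∧ F j ≠ 1 := by
    intro j hj
    obtain ⟨i, hi⟩ : ∃ i, k - j = i + 1 := ⟨k - j - 1, by omega⟩
    rw [hF' j hj, hi, Nat.add_sub_cancel]
    refine ⟨?_, ?_, ?_⟩
    · have := mul_le_mul_left (hq_lb i) (q i)⁻¹
      rwa [mul_inv_cancel_right] at this
    · have := mul_le_mul_left (hq_anti i) (q i)⁻¹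
      rwa [mul_inv_cancel] at this
    · intro heq
      have heq2 : q (i + 1) = q i := by
        have h := congrArg (· * q i) heq
        simp only [one_mul] at h
        rwa [inv_mul_cancel_right] at h
      have hprop : ∀ m : ℕ, q (i + m) = q i := by
        intro m
        induction m with
        | zero => rfl
        | succ m ihm =>
          rw [show i + (m + 1) = (i + m) + 1 from rfl, hqrec, ihm, ← hqrec, heq2]
      have hik : i + 1 ≤ k := by omega
      have e1 : q k = q i := by
        rw [show k = i + (k - i) by omega]; exact hprop _
      have e2 : q (k - 1) = q i := by
        rw [show k - 1 = i + (k - 1 - i) by omega]; exact hprop _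
      have e3 : q (k - 1) = g := by rw [e2, ← e1, hqk]
      exact hkmin (k - 1) (by omega) (e3 ▸ hq_pow (k - 1))
  have hLmem : ∀ a ∈ (List.range k).map F, s⁻¹ ≤ a ∧ a ≤ 1 ∧ a ≠ 1 := by
    intro a ha
    rw [List.mem_map] at ha
    obtain ⟨j, hj, rfl⟩ := ha
    exact hfac j (List.mem_range.mp hj)
  have hLlen : ((List.range k).map F).length = k := by simp
  have hLget : ∀ j (h : j < ((List.range k).map F).length),
      ((List.range k).map F).get ⟨j, h⟩ = F j := by
    intro j h
    simp
  have hLmax : ∀ j : ℕ, ∀ hj : j + 1 < ((List.range k).map F).length,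
      s⁻¹ * (((List.range k).map F).get ⟨j + 1, hj⟩)⁻¹ ⊔
        ((List.range k).map F).get ⟨j, Nat.lt_of_succ_lt hj⟩ = 1 := by
    intro j hj
    have hjk : j + 1 < k := by rwa [hLlen] at hj
    obtain ⟨i, hi⟩ : ∃ i, i = k - j - 2 := ⟨_, rfl⟩
    rw [hLget (j + 1) hj, hLget j (Nat.lt_of_succ_lt hj),
      hF' (j + 1) hjk, hF' j (by omega),
      show k - (j + 1) - 1 = i by omega, show k - (j + 1) = i + 1 by omega,
      show k - j - 1 = i + 1 by omega, show k - j = i + 2 by omega]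
    exact hmaxcore i
  have hnosplit : ∀ j : ℕ, ∀ hj : j + 1 < ((List.range k).map F).length,
      ¬ ∃ h h' : G, h ≤ 1 ∧ h' ≤ 1 ∧ h ≠ 1 ∧
        h' * h = ((List.range k).map F).get ⟨j, Nat.lt_of_succ_lt hj⟩ ∧
        s⁻¹ ≤ h * ((List.range k).map F).get ⟨j + 1, hj⟩ ∧
        h * ((List.range k).map F).get ⟨j + 1, hj⟩ ≤ 1 := by
    intro j hj
    rintro ⟨h, h', hh1, hh'1, hhne, hsplit, hlb, -⟩
    have h1 : ((List.range k).map F).get ⟨j, Nat.lt_of_succ_lt hj⟩ ≤ h := by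
      have hinv : (1 : G) ≤ h'⁻¹ := by
        have := mul_le_mul_left hh'1 h'⁻¹
        rwa [mul_inv_cancel, one_mul] at this
      have h3 := mul_le_mul_left hinv (h' * h)
      rw [one_mul, inv_mul_cancel_left] at h3
      rwa [hsplit] at h3
    have h2 : s⁻¹ * (((List.range k).map F).get ⟨j + 1, hj⟩)⁻¹ ≤ h := by
      have := mul_le_mul_left hlb (((List.range k).map F).get ⟨j + 1, hj⟩)⁻¹
      rwa [mul_inv_cancel_right] at this
    have hone : (1 : G) ≤ h := by
      rw [← hLmax j hj]; exact sup_le h2 h1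
    exact hhne (le_antisymm hh1 hone)
  refine ⟨⟨hprod.symm, hLmem, hnosplit⟩, ?_, ?_⟩
  · -- uniqueness
    intro l hl
    obtain ⟨hlprod, hlmem, hlnos⟩ := hl
    have hlmem' : ∀ a ∈ l, s⁻¹ ≤ a ∧ a ≤ 1 := fun a ha =>
      ⟨(hlmem a ha).1, (hlmem a ha).2.1⟩
    have hlmax : ∀ j : ℕ, ∀ hj : j + 1 < l.length,
        s⁻¹ * (l.get ⟨j + 1, hj⟩)⁻¹ ⊔ l.get ⟨j, Nat.lt_of_succ_lt hj⟩ = 1 := by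
      intro j hj
      by_contra hne
      obtain ⟨hx1, hx2, -⟩ := hlmem _ (l.get_mem ⟨j, Nat.lt_of_succ_lt hj⟩)
      obtain ⟨hy1, hy2, -⟩ := hlmem _ (l.get_mem ⟨j + 1, hj⟩)
      set x := l.get ⟨j, Nat.lt_of_succ_lt hj⟩ with hxd
      set y := l.get ⟨j + 1, hj⟩ with hyd
      set u := s⁻¹ * y⁻¹ ⊔ x with hu
      have hu1 : u ≤ 1 := by
        refine sup_le ?_ hx2
        have := mul_le_mul_left hy1 y⁻¹
        rwa [mul_inv_cancel] at this
      have huy : u * y = s⁻¹ ⊔ x * y := by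
        rw [hu, sup_mul, mul_assoc, inv_mul_cancel, mul_one]
      refine hlnos j hj ⟨u, x * u⁻¹, hu1, ?_, hne, ?_, ?_, ?_⟩
      · have := mul_le_mul_left (le_sup_right : x ≤ u) u⁻¹
        rwa [mul_inv_cancel] at this
      · rw [inv_mul_cancel_right]
      · rw [huy]; exact le_sup_left
      · rw [huy]
        refine sup_le hsle ?_
        have := mul_le_mul_left hx2 y
        rw [one_mul] at this
        exact this.trans hy2
    have hP := rnf_suffix_prod ⟨hs1, hn, harch⟩ l hlmem' hlmax
    rw [← hlprod] at hP
    have hk' : s ^ (-(l.length : ℤ)) ≤ g := by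
      have h5 := hP l.length le_rfl
      rw [Nat.sub_self, List.drop_zero, ← hlprod] at h5
      exact sup_eq_left.mp h5.symm
    have hkk' : k ≤ l.length := by
      by_contra hcon
      exact hkmin l.length (by omega) hk'
    have hk'k : l.length ≤ k := by
      by_contra hlt
      push_neg at hlt
      have h0 : 0 < l.length := by omega
      have h5 := hP (l.length - 1) (by omega)
      rw [show l.length - (l.length - 1) = 1 by omega] at h5
      have h6 : s ^ (-((l.length - 1 : ℕ) : ℤ)) ≤ g :=
        le_trans (rnf_zpow_le_zpow hs1.le (by omega)) hk
      have h7 : (l.drop 1).prod = g := by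
        rw [h5, sup_eq_left.2 h6]
      have hcons : l = l[0] :: l.drop 1 := by
        have := List.drop_eq_getElem_cons h0 (l := l)
        rwa [List.drop_zero] at this
      have h8 : l[0] * g = g := by
        conv_rhs => rw [hlprod]
        conv_rhs => rw [hcons]
        rw [List.prod_cons, h7]
      have h9 : l[0] = 1 := by
        have := congrArg (· * g⁻¹) h8
        rwa [mul_inv_cancel_right, mul_inv_cancel] at this
      exact (hlmem l[0] (List.getElem_mem h0)).2.2 h9
    have hkeq : l.length = k := le_antisymm hk'k hkk'
    apply List.ext_get (by rw [hLlen, hkeq])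
    intro j h1 h2
    have hjk : j < k := by omega
    have hd1 : (l.drop j).prod = q (k - j) := by
      have h5 := hP (k - j) (by omega)
      rw [show l.length - (k - j) = j by omega] at h5
      exact h5
    have hd2 : (l.drop (j + 1)).prod = q (k - j - 1) := by
      have h5 := hP (k - j - 1) (by omega)
      rw [show l.length - (k - j - 1) = j + 1 by omega] at h5
      exact h5
    have hcons : (l.drop j).prod = l[j] * (l.drop (j + 1)).prod := by
      rw [List.drop_eq_getElem_cons h1, List.prod_cons]
    rw [hd1, hd2] at hcons
    have hlj : l[j] = q (k - j) * (q (k - j - 1))⁻¹ := by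
      rw [hcons, mul_inv_cancel_right]
    rw [List.get_eq_getElem, List.get_eq_getElem, List.getElem_map,
      List.getElem_range, hlj, hF' j hjk]
  · -- right-maximality
    intro i h1i hik
    obtain ⟨i', rfl⟩ : ∃ i', i = i' + 1 := ⟨i - 1, by omega⟩
    have e1 : (-((i' + 1 : ℕ) : ℤ) + 1) = -((i' : ℕ) : ℤ) := by push_cast; ring
    have e2 : (-((i' + 1 : ℕ) : ℤ) - 1) = -((i' + 2 : ℕ) : ℤ) := by push_cast; ring
    rw [e1, e2]
    exact hmaxcore i'
end

section
/- Let G be a right ℓ-group with strong order unit s. Then for every k ≥ 0, the strong order intervals with respect to the order ≤ and its dual left-invariant order ≼ (defined by g ≼ h iff h⁻¹ ≤ g⁻¹) coincide: [s^{-k}, e]_≤ = [s^{-k}, e]_≼. -/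
section Aux

variable {G : Type*} [Lattice G] [Group G]
    [CovariantClass G G (Function.swap (· * ·)) (· ≤ ·)] {s : G}

lemma conj_neg (hn : IsNormal s) {x : G} (hx : x ≤ 1) : s * x * s⁻¹ ≤ 1 := by
  have h : s * x ≤ s := by
    have := (hn x 1).1
    rw [inf_eq_left.mpr hx, mul_one] at this
    rw [this]
    exact inf_le_right
  have := mul_le_mul_left h s⁻¹
  simpa using this

lemma conj_inv_neg (hn : IsNormal s) {x : G} (hx : x ≤ 1) : s⁻¹ * x * s ≤ 1 := by
  have h : s⁻¹ * x ≤ s⁻¹ := by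
    have h0 := (hn (s⁻¹ * x) s⁻¹).1
    simp only [mul_inv_cancel_left, mul_inv_cancel, mul_one] at h0
    rw [inf_eq_left.mpr hx] at h0
    have h2 : s⁻¹ * x ⊓ s⁻¹ = s⁻¹ * x := by
      conv_rhs => rw [← h0, inv_mul_cancel_left]
    exact (le_of_eq h2.symm).trans inf_le_right
  have := mul_le_mul_left h s
  simpa using this

lemma conj_pow_neg (hn : IsNormal s) (k : ℕ) {x : G} (hx : x ≤ 1) :
    s ^ k * x * (s ^ k)⁻¹ ≤ 1 := by
  induction k with
  | zero => simpa using hx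
  | succ n ih =>
      have : s ^ (n + 1) * x * (s ^ (n + 1))⁻¹ = s * (s ^ n * x * (s ^ n)⁻¹) * s⁻¹ := by
        group
      rw [this]
      exact conj_neg hn ih

lemma conj_pow_inv_neg (hn : IsNormal s) (k : ℕ) {x : G} (hx : x ≤ 1) :
    (s ^ k)⁻¹ * x * s ^ k ≤ 1 := by
  induction k with
  | zero => simpa using hx
  | succ n ih =>
      have : (s ^ (n + 1))⁻¹ * x * s ^ (n + 1) = s⁻¹ * ((s ^ n)⁻¹ * x * s ^ n) * s := by
        group
      rw [this]
      exact conj_inv_neg hn ih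

end Aux

/-- For a strong order unit `s`, the strong order intervals for the order `≤` and for the
dual left-invariant order `≼` (with `g ≼ h ↔ h⁻¹ ≤ g⁻¹`) coincide:
`[s^{-k}, 1]_≤ = [s^{-k}, 1]_≼`. -/
theorem strong_order_intervals_coincide {G : Type*} [Lattice G] [Group G]
    [CovariantClass G G (Function.swap (· * ·)) (· ≤ ·)]
    (s : G) (hs : IsStrongOrderUnit s) (k : ℕ) (g : G) :
    (s ^ (-(k : ℤ)) ≤ g ∧ g ≤ 1) ↔ (g⁻¹ ≤ (s ^ (-(k : ℤ)))⁻¹ ∧ (1 : G)⁻¹ ≤ g⁻¹) := by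
  have hn := hs.2.1
  rw [zpow_neg, zpow_natCast, inv_inv, inv_one]
  constructor
  · rintro ⟨h1, h2⟩
    constructor
    · -- g⁻¹ ≤ s ^ k
      have hx : (s ^ k)⁻¹ * g⁻¹ ≤ 1 := by
        have := mul_le_mul_left h1 g⁻¹
        simpa using this
      have := conj_pow_neg hn k hx
      have h3 : g⁻¹ * (s ^ k)⁻¹ ≤ 1 := by
        have e : s ^ k * ((s ^ k)⁻¹ * g⁻¹) * (s ^ k)⁻¹ = g⁻¹ * (s ^ k)⁻¹ := by group
        rwa [e] at this
      have := mul_le_mul_left h3 (s ^ k)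
      simpa using this
    · have := mul_le_mul_left h2 g⁻¹
      simpa using this
  · rintro ⟨h1, h2⟩
    constructor
    · -- (s ^ k)⁻¹ ≤ g
      have hx : g⁻¹ * (s ^ k)⁻¹ ≤ 1 := by
        have := mul_le_mul_left h1 (s ^ k)⁻¹
        simpa using this
      have := conj_pow_inv_neg hn k hx
      have h3 : (s ^ k)⁻¹ * g⁻¹ ≤ 1 := by
        have e : (s ^ k)⁻¹ * (g⁻¹ * (s ^ k)⁻¹) * s ^ k = (s ^ k)⁻¹ * g⁻¹ := by group
        rwa [e] at this
      have := mul_le_mul_left h3 g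
      simpa using this
    · have := mul_le_mul_left h2 g
      simpa using this
end

section
/- Let G be a modular noetherian right ℓ-group. Then any two atomic factorizations of g ∈ G⁻ (factorizations of g as a product of dual atoms x ≺ e) have the same number of factors, and the resulting degree function deg' : G⁻ → ℤ≥0 extends uniquely to a group homomorphism deg : G → ℤ. -/
/-- A right ℓ-group is noetherian if every ascending chain bounded above and every
descending chain bounded below stabilizes. -/
def IsLatticeNoetherian (G : Type*) [Lattice G] : Prop :=
  (∀ f : ℕ → G, Monotone f → (∃ h : G, ∀ n, f n ≤ h) → ∃ N, ∀ m, N ≤ m → f m = f N) ∧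
  (∀ f : ℕ → G, Antitone f → (∃ h : G, ∀ n, h ≤ f n) → ∃ N, ∀ m, N ≤ m → f m = f N)

section Aux
set_option linter.unusedSectionVars false

variable {G : Type*} [Lattice G] [Group G]
    [CovariantClass G G (Function.swap (· * ·)) (· ≤ ·)]

/-- Atomic factorization predicate -/
private def AFact (l : List G) (g : G) : Prop := (∀ x ∈ l, x ⋖ 1) ∧ l.prod = g

private lemma covBy_mul_right {a b : G} (c : G) (h : a ⋖ b) : a * c ⋖ b * c :=
  (apply_covBy_apply_iff (OrderIso.mulRight c)).2 h

private lemma prod_le_one' : ∀ l : List G, (∀ x ∈ l, x ≤ 1) → l.prod ≤ 1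
  | [], _ => by simp
  | a :: t, h => by
    have ht : t.prod ≤ 1 := prod_le_one' t fun x hx => h x (List.mem_cons_of_mem _ hx)
    have h2 : a * t.prod ≤ t.prod := by
      simpa using mul_le_mul_left (h a List.mem_cons_self) t.prod
    simpa using h2.trans ht

private lemma fact_le_one {l : List G} {g : G} (h : AFact l g) : g ≤ 1 := by
  rw [← h.2]; exact prod_le_one' l fun x hx => (h.1 x hx).1.le

/-- no strictly increasing sequence bounded above -/
private lemma no_strict_up (hG : IsLatticeNoetherian G) (S : Set G) (hne : S.Nonempty)
    (hub : ∃ h : G, ∀ x ∈ S, x ≤ h) (hstep : ∀ x ∈ S, ∃ y ∈ S, x < y) : False := by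
  obtain ⟨h, hh⟩ := hub
  have step : ∀ x : S, ∃ y : S, (x : G) < y := fun x => by
    obtain ⟨y, hy, hxy⟩ := hstep x x.2; exact ⟨⟨y, hy⟩, hxy⟩
  choose f hf using step
  obtain ⟨x0, hx0⟩ := hne
  let s : ℕ → S := fun n => f^[n] ⟨x0, hx0⟩
  have hs : ∀ n, (s n : G) < s (n + 1) := by
    intro n
    have : s (n + 1) = f (s n) := Function.iterate_succ_apply' f n _
    rw [this]; exact hf (s n)
  have hmono : Monotone fun n => (s n : G) :=
    monotone_nat_of_le_succ fun n => (hs n).le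
  obtain ⟨N, hN⟩ := hG.1 (fun n => (s n : G)) hmono ⟨h, fun n => hh _ (s n).2⟩
  exact absurd (hN (N + 1) (Nat.le_succ N)) (hs N).ne'

/-- no strictly decreasing sequence bounded below -/
private lemma no_strict_down (hG : IsLatticeNoetherian G) (S : Set G) (hne : S.Nonempty)
    (hlb : ∃ h : G, ∀ x ∈ S, h ≤ x) (hstep : ∀ x ∈ S, ∃ y ∈ S, y < x) : False := by
  obtain ⟨h, hh⟩ := hlb
  have step : ∀ x : S, ∃ y : S, (y : G) < x := fun x => by
    obtain ⟨y, hy, hxy⟩ := hstep x x.2; exact ⟨⟨y, hy⟩, hxy⟩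
  choose f hf using step
  obtain ⟨x0, hx0⟩ := hne
  let s : ℕ → S := fun n => f^[n] ⟨x0, hx0⟩
  have hs : ∀ n, (s (n + 1) : G) < s n := by
    intro n
    have : s (n + 1) = f (s n) := Function.iterate_succ_apply' f n _
    rw [this]; exact hf (s n)
  have hmono : Antitone fun n => (s n : G) :=
    antitone_nat_of_succ_le fun n => (hs n).le
  obtain ⟨N, hN⟩ := hG.2 (fun n => (s n : G)) hmono ⟨h, fun n => hh _ (s n).2⟩
  exact absurd (hN (N + 1) (Nat.le_succ N)) (hs N).ne

/-- a cover of g inside (g, h] exists -/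
private lemma exists_cover (hG : IsLatticeNoetherian G) {g h : G} (hlt : g < h) :
    ∃ m, g ⋖ m ∧ m ≤ h := by
  by_contra hcon
  push_neg at hcon
  apply no_strict_down hG {x | g < x ∧ x ≤ h} ⟨h, hlt, le_rfl⟩ ⟨g, fun x hx => hx.1.le⟩
  rintro x ⟨hgx, hxh⟩
  have : ¬ g ⋖ x := fun hc => hcon x hc hxh
  rw [not_covBy_iff hgx] at this
  obtain ⟨z, hz1, hz2⟩ := this
  exact ⟨z, ⟨hz1, hz2.le.trans hxh⟩, hz2⟩

/-- existence of atomic factorizations -/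
private lemma factor_exists (hG : IsLatticeNoetherian G) : ∀ g : G, g ≤ 1 → ∃ l, AFact l g := by
  by_contra hcon
  push_neg at hcon
  obtain ⟨g0, hg0, hng0⟩ := hcon
  apply no_strict_up hG {g : G | g ≤ 1 ∧ ∀ l, ¬ AFact l g}
    ⟨g0, hg0, fun l hl => hng0 l hl⟩ ⟨1, fun x hx => hx.1⟩
  rintro g ⟨hg1, hgnf⟩
  have hglt : g < 1 := by
    rcases lt_or_eq_of_le hg1 with h | h
    · exact h
    · exact absurd ⟨by simp, by simp [h]⟩ (hgnf [])
  obtain ⟨m, hgm, hm1⟩ := exists_cover hG hglt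
  refine ⟨m, ⟨hm1, fun l hl => ?_⟩, hgm.lt⟩
  apply hgnf (g * m⁻¹ :: l)
  constructor
  · intro x hx
    rcases List.mem_cons.1 hx with h | h
    · subst h
      have := covBy_mul_right m⁻¹ hgm
      simpa using this
    · exact hl.1 x h
  · simp [hl.2, inv_mul_cancel_right]

private lemma fact_one_nil {l : List G} (h : AFact l 1) : l = [] := by
  cases l with
  | nil => rfl
  | cons b t =>
    exfalso
    have hb : b ⋖ 1 := h.1 b List.mem_cons_self
    have hp : b * t.prod = 1 := by simpa using h.2
    have hcov : b * t.prod ⋖ 1 * t.prod := covBy_mul_right t.prod hb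
    rw [hp, one_mul] at hcov
    have ht1 : t.prod ≤ 1 :=
      prod_le_one' t fun x hx => (h.1 x (List.mem_cons_of_mem _ hx)).1.le
    exact absurd (hcov.lt.trans_le ht1) (lt_irrefl 1)

variable [IsModularLattice G]

/-- Jordan–Hölder: any two atomic factorizations have equal length -/
private lemma factor_length_unique (hG : IsLatticeNoetherian G) :
    ∀ n : ℕ, ∀ l l' : List G, ∀ g : G, l.length ≤ n → AFact l g → AFact l' g →
      l.length = l'.length := by
  intro n
  induction n with
  | zero =>
    intro l l' g hlen hl hl'
    have : l = [] := List.eq_nil_of_length_eq_zero (Nat.le_zero.1 hlen)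
    subst this
    have hg : g = 1 := by simpa using hl.2.symm
    subst hg
    simp [fact_one_nil hl']
  | succ n ih =>
    intro l l' g hlen hl hl'
    cases l with
    | nil =>
      have hg : g = 1 := by simpa using hl.2.symm
      subst hg
      simp [fact_one_nil hl']
    | cons a s =>
      cases l' with
      | nil =>
        have hg : g = 1 := by simpa using hl'.2.symm
        subst hg
        exact absurd (fact_one_nil hl) (by simp)
      | cons b t =>
        have hs : AFact s s.prod := ⟨fun x hx => hl.1 x (List.mem_cons_of_mem _ hx), rfl⟩
        have ht : AFact t t.prod := ⟨fun x hx => hl'.1 x (List.mem_cons_of_mem _ hx), rfl⟩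
        have hga : g ⋖ s.prod := by
          have := covBy_mul_right s.prod (hl.1 a List.mem_cons_self)
          rw [one_mul] at this
          have hp : a * s.prod = g := by simpa using hl.2
          rwa [hp] at this
        have hgb : g ⋖ t.prod := by
          have := covBy_mul_right t.prod (hl'.1 b List.mem_cons_self)
          rw [one_mul] at this
          have hp : b * t.prod = g := by simpa using hl'.2
          rwa [hp] at this
        have hslen : s.length ≤ n := Nat.succ_le_succ_iff.1 (by simpa using hlen)
        by_cases hAB : s.prod = t.prod
        · have := ih s t s.prod hslen hs (hAB ▸ ht)
          simp [this]
        · -- the modular case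
          set A := s.prod with hA
          set B := t.prod with hB
          have hinf : A ⊓ B = g := by
            rcases hga.eq_or_eq (le_inf hga.lt.le hgb.lt.le : g ≤ A ⊓ B) inf_le_left with
              h | h
            · exact h.symm ▸ rfl
            · exfalso
              have hAle : A ≤ B := h ▸ inf_le_right
              rcases hgb.eq_or_eq hga.lt.le hAle with h2 | h2
              · exact hga.lt.ne' h2
              · exact hAB h2
          have hAcov : A ⋖ A ⊔ B := covBy_sup_of_inf_covBy_right (hinf ▸ hgb)
          have hBcov : B ⋖ A ⊔ B := covBy_sup_of_inf_covBy_left (hinf ▸ hga)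
          set D := A ⊔ B with hD
          have hD1 : D ≤ 1 :=
            sup_le (fact_le_one hs) (fact_le_one ht)
          obtain ⟨u, hu⟩ := factor_exists hG D hD1
          have hAu : AFact (A * D⁻¹ :: u) A := by
            constructor
            · intro x hx
              rcases List.mem_cons.1 hx with h | h
              · subst h
                have := covBy_mul_right D⁻¹ hAcov
                simpa using this
              · exact hu.1 x h
            · simp [hu.2, inv_mul_cancel_right]
          have hBu : AFact (B * D⁻¹ :: u) B := by
            constructor
            · intro x hx
              rcases List.mem_cons.1 hx with h | h
              · subst h
                have := covBy_mul_right D⁻¹ hBcov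
                simpa using this
              · exact hu.1 x h
            · simp [hu.2, inv_mul_cancel_right]
          have h1 : s.length = u.length + 1 := by
            have := ih s (A * D⁻¹ :: u) A hslen hs hAu
            simpa using this
          have h2 : u.length + 1 = t.length := by
            have := ih (B * D⁻¹ :: u) t B (by simpa [h1.symm] using hslen) hBu ht
            simpa using this
          simp [h1, h2]

open Classical in
private noncomputable def deg0 (hG : IsLatticeNoetherian G) (g : G) : ℕ :=
  if h : g ≤ 1 then (factor_exists hG g h).choose.length else 0

private lemma deg0_eq (hG : IsLatticeNoetherian G) {g : G} {l : List G} (hf : AFact l g) :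
    deg0 hG g = l.length := by
  have hg : g ≤ 1 := fact_le_one hf
  rw [deg0, dif_pos hg]
  exact factor_length_unique hG _ _ l g le_rfl (factor_exists hG g hg).choose_spec hf

private lemma deg0_one (hG : IsLatticeNoetherian G) : deg0 hG (1 : G) = 0 := by
  have : AFact ([] : List G) (1 : G) := ⟨by simp, by simp⟩
  simp [deg0_eq hG this]

private lemma deg0_mul (hG : IsLatticeNoetherian G) {a b : G} (ha : a ≤ 1) (hb : b ≤ 1) :
    deg0 hG (a * b) = deg0 hG a + deg0 hG b := by
  obtain ⟨la, hla⟩ := factor_exists hG a ha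
  obtain ⟨lb, hlb⟩ := factor_exists hG b hb
  have hab : AFact (la ++ lb) (a * b) := by
    constructor
    · intro x hx
      rcases List.mem_append.1 hx with h | h
      · exact hla.1 x h
      · exact hlb.1 x h
    · simp [hla.2, hlb.2]
  rw [deg0_eq hG hab, deg0_eq hG hla, deg0_eq hG hlb]
  simp

private noncomputable def degZ (hG : IsLatticeNoetherian G) (g : G) : ℤ :=
  (deg0 hG (g ⊓ 1) : ℤ) - (deg0 hG (1 ⊓ g⁻¹) : ℤ)

private lemma degZ_eq (hG : IsLatticeNoetherian G) {a b g : G} (ha : a ≤ 1) (hb : b ≤ 1)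
    (hab : a * g = b) : degZ hG g = (deg0 hG b : ℤ) - (deg0 hG a : ℤ) := by
  set b₀ := g ⊓ 1 with hb₀def
  set a₀ := 1 ⊓ g⁻¹ with ha₀def
  have ha₀ : a₀ ≤ 1 := inf_le_left
  have hb₀ : b₀ ≤ 1 := inf_le_right
  have hkey : a₀ * g = b₀ := by
    rw [ha₀def, inf_mul, one_mul, inv_mul_cancel, hb₀def]
  have hbg : b ≤ g := by
    rw [← hab]
    calc a * g ≤ 1 * g := mul_le_mul_left ha g
    _ = g := one_mul g
  have hbb₀ : b ≤ b₀ := le_inf hbg hb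
  set q := b * b₀⁻¹ with hq
  have hq1 : q ≤ 1 := by
    have := mul_le_mul_left hbb₀ b₀⁻¹
    simpa [hq] using this
  have hbq : b = q * b₀ := by rw [hq]; group
  have haq : a = q * a₀ := by
    have ha' : a = b * g⁻¹ := by rw [← hab]; group
    have ha₀' : a₀ = b₀ * g⁻¹ := by rw [← hkey]; group
    rw [ha', ha₀', hq]; group
  have e1 : deg0 hG b = deg0 hG q + deg0 hG b₀ := by
    rw [hbq]; exact deg0_mul hG hq1 hb₀
  have e2 : deg0 hG a = deg0 hG q + deg0 hG a₀ := by
    rw [haq]; exact deg0_mul hG hq1 ha₀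
  rw [degZ, e1, e2]
  push_cast
  ring

end Aux

/-- In a modular noetherian right ℓ-group, any two atomic factorizations (products of
dual atoms `x ⋖ 1`) of `g ≤ 1` have the same length, and the resulting degree function
on the negative cone extends uniquely to a group homomorphism `deg : G → ℤ`. -/
theorem atomic_factorizations_and_degree {G : Type*} [Lattice G] [Group G]
    [CovariantClass G G (Function.swap (· * ·)) (· ≤ ·)] [IsModularLattice G]
    (hG : IsLatticeNoetherian G) :
    (∀ g : G, g ≤ 1 → ∀ l l' : List G,
      (∀ x ∈ l, x ⋖ 1) → l.prod = g → (∀ x ∈ l', x ⋖ 1) → l'.prod = g →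
      l.length = l'.length) ∧
    (∃! d : G → ℤ, (∀ a b : G, d (a * b) = d a + d b) ∧
      ∀ g : G, g ≤ 1 → ∀ l : List G, (∀ x ∈ l, x ⋖ 1) → l.prod = g →
        d g = l.length) := by
  constructor
  · intro g _ l l' hl hlp hl' hlp'
    exact factor_length_unique hG l.length l l' g le_rfl ⟨hl, hlp⟩ ⟨hl', hlp'⟩
  · refine ⟨degZ hG, ⟨?_, ?_⟩, ?_⟩
    · -- homomorphism
      intro g h
      set a := 1 ⊓ g⁻¹ with hadef
      set b := g ⊓ 1 with hbdef
      set c := 1 ⊓ h⁻¹ with hcdef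
      set e0 := h ⊓ 1 with he0def
      have ha1 : a ≤ 1 := inf_le_left
      have hb1 : b ≤ 1 := inf_le_right
      have hc1 : c ≤ 1 := inf_le_left
      have he01 : e0 ≤ 1 := inf_le_right
      have hag : a * g = b := by rw [hadef, inf_mul, one_mul, inv_mul_cancel, hbdef]
      have hch : c * h = e0 := by rw [hcdef, inf_mul, one_mul, inv_mul_cancel, he0def]
      set m := b ⊓ c with hmdef
      have hm1 : m ≤ 1 := le_trans inf_le_left hb1
      set f := m * c⁻¹ with hfdef
      set e := m * b⁻¹ with hedef
      have hmc : m ≤ c := by rw [hmdef]; exact inf_le_right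
      have hmb : m ≤ b := by rw [hmdef]; exact inf_le_left
      have hf1 : f ≤ 1 := by
        rw [hfdef]
        calc m * c⁻¹ ≤ c * c⁻¹ := mul_le_mul_left hmc c⁻¹
        _ = 1 := mul_inv_cancel c
      have he1 : e ≤ 1 := by
        rw [hedef]
        calc m * b⁻¹ ≤ b * b⁻¹ := mul_le_mul_left hmb b⁻¹
        _ = 1 := mul_inv_cancel b
      have hea1 : e * a ≤ 1 := by
        have : e * a ≤ 1 * a := mul_le_mul_left he1 a
        rw [one_mul] at this
        exact this.trans ha1
      have hfe01 : f * e0 ≤ 1 := by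
        have : f * e0 ≤ 1 * e0 := mul_le_mul_left hf1 e0
        rw [one_mul] at this
        exact this.trans he01
      have hkey : (e * a) * (g * h) = f * e0 := by
        have h1 : e * a * (g * h) = e * (a * g) * h := by group
        rw [h1, hag]
        have h2 : e * b * h = m * h := by rw [hedef]; group
        rw [h2]
        have h3 : f * e0 = m * (c⁻¹ * e0) := by rw [hfdef]; group
        rw [h3, ← hch]
        group
      have Hgh := degZ_eq hG hea1 hfe01 hkey
      have Hg := degZ_eq hG ha1 hb1 hag
      have Hh := degZ_eq hG hc1 he01 hch
      have hfe : deg0 hG (f * e0) = deg0 hG f + deg0 hG e0 := deg0_mul hG hf1 he01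
      have hea : deg0 hG (e * a) = deg0 hG e + deg0 hG a := deg0_mul hG he1 ha1
      have hfc : deg0 hG f + deg0 hG c = deg0 hG m := by
        rw [← deg0_mul hG hf1 hc1]
        congr 1
        rw [hfdef]; group
      have heb : deg0 hG e + deg0 hG b = deg0 hG m := by
        rw [← deg0_mul hG he1 hb1]
        congr 1
        rw [hedef]; group
      rw [Hgh, Hg, Hh, hfe, hea]
      have hfc' : (deg0 hG f : ℤ) + deg0 hG c = deg0 hG m := by exact_mod_cast hfc
      have heb' : (deg0 hG e : ℤ) + deg0 hG b = deg0 hG m := by exact_mod_cast heb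
      push_cast
      linarith
    · -- value on negative cone
      intro g hg l hl hlp
      have hb : g ⊓ 1 = g := inf_eq_left.2 hg
      have hginv : (1 : G) ≤ g⁻¹ := by
        have := mul_le_mul_left hg g⁻¹
        simpa using this
      have ha : (1 : G) ⊓ g⁻¹ = 1 := inf_eq_left.2 hginv
      rw [degZ, hb, ha, deg0_one hG, deg0_eq hG (⟨hl, hlp⟩ : AFact l g)]
      simp
    · -- uniqueness
      intro d' ⟨hd'mul, hd'len⟩
      funext g
      set a := 1 ⊓ g⁻¹ with hadef
      set b := g ⊓ 1 with hbdef
      have ha1 : a ≤ 1 := inf_le_left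
      have hb1 : b ≤ 1 := inf_le_right
      have hag : a * g = b := by rw [hadef, inf_mul, one_mul, inv_mul_cancel, hbdef]
      obtain ⟨la, hla⟩ := factor_exists hG a ha1
      obtain ⟨lb, hlb⟩ := factor_exists hG b hb1
      have hda : d' a = deg0 hG a := by
        rw [hd'len a ha1 la hla.1 hla.2, deg0_eq hG hla]
      have hdb : d' b = deg0 hG b := by
        rw [hd'len b hb1 lb hlb.1 hlb.2, deg0_eq hG hlb]
      have hsum : d' a + d' g = d' b := by rw [← hd'mul, hag]
      have := degZ_eq hG ha1 hb1 hag
      rw [this]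
      linarith [hsum, hda, hdb]
end

section
/- In a modular noetherian right ℓ-group G with degree homomorphism deg : G → ℤ, the parallelogram identity deg(g) + deg(h) = deg(g ∨ h) + deg(g ∧ h) holds for all g, h ∈ G. -/
/-- The parallelogram identity for the degree homomorphism of a modular noetherian
right ℓ-group: `deg g + deg h = deg (g ⊔ h) + deg (g ⊓ h)`. -/
theorem parallelogram_identity {G : Type*} [Lattice G] [Group G]
    [CovariantClass G G (Function.swap (· * ·)) (· ≤ ·)] [IsModularLattice G]
    (hG : IsLatticeNoetherian G)
    (d : G → ℤ) (hd : ∀ a b : G, d (a * b) = d a + d b)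
    (hatom : ∀ x : G, x ⋖ 1 → d x = 1)
    (g h : G) :
    d g + d h = d (g ⊔ h) + d (g ⊓ h) := by
  classical
  -- basic facts about d
  have hd1 : d 1 = 0 := by
    have := hd 1 1; simp at this; omega
  have hdinv : ∀ a : G, d a⁻¹ = - d a := by
    intro a
    have := hd a a⁻¹
    rw [mul_inv_cancel, hd1] at this
    omega
  -- covering pairs differ in degree by one
  have hcov : ∀ x y : G, x ⋖ y → d x = d y + 1 := by
    intro x y hxy
    have h1 : x * y⁻¹ ⋖ 1 := by
      have := (apply_covBy_apply_iff (OrderIso.mulRight (y⁻¹ : G))).2 hxy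
      simpa using this
    have := hatom _ h1
    rw [hd, hdinv] at this
    omega
  -- existence of maximal elements in nonempty bounded-above sets (from ACC)
  have hmax : ∀ (S : Set G) (x₀ : G), x₀ ∈ S → ∀ b : G,
      (∀ x ∈ S, x ≤ b) → ∃ m ∈ S, ∀ y ∈ S, ¬ m < y := by
    intro S x₀ hx₀ b hb
    by_contra hcon
    push_neg at hcon
    choose F hF1 hF2 using hcon
    let f : ℕ → {x // x ∈ S} := fun n => Nat.rec ⟨x₀, hx₀⟩ (fun _ p => ⟨F p.1 p.2, hF1 p.1 p.2⟩) n
    have hfe : ∀ n, (f (n + 1)).1 = F (f n).1 (f n).2 := fun n => rfl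
    have hstep : ∀ n, (f n).1 < (f (n + 1)).1 := by
      intro n
      rw [hfe n]
      exact hF2 (f n).1 (f n).2
    have hmono : Monotone fun n => (f n).1 :=
      (strictMono_nat_of_lt_succ hstep).monotone
    obtain ⟨N, hN⟩ := hG.1 (fun n => (f n).1) hmono ⟨b, fun n => hb _ (f n).2⟩
    have := hN (N + 1) (Nat.le_succ N)
    exact absurd this (hstep N).ne'
  -- well-foundedness of < on elements above a fixed bound (from DCC)
  have hwf : ∀ c : G, WellFounded ((· < ·) : {x : G // c ≤ x} → {x : G // c ≤ x} → Prop) := by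
    intro c
    rw [RelEmbedding.wellFounded_iff_isEmpty]
    constructor
    intro f
    have hanti : Antitone fun n => ((f n : {x : G // c ≤ x}) : G) := by
      apply antitone_nat_of_succ_le
      intro n
      exact (Subtype.coe_lt_coe.2 (f.map_rel_iff.2 (Nat.lt_succ_self n))).le
    obtain ⟨N, hN⟩ := hG.2 _ hanti ⟨c, fun n => (f n).2⟩
    have h1 : ((f (N + 1) : {x : G // c ≤ x}) : G) = f N := hN (N + 1) (Nat.le_succ N)
    have h2 : ((f (N + 1) : {x : G // c ≤ x}) : G) < f N :=
      Subtype.coe_lt_coe.2 (f.map_rel_iff.2 (Nat.lt_succ_self N))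
    exact h2.ne h1
  -- main induction
  suffices H : ∀ c : G, c ≤ h → ∀ z : {x : G // c ≤ x}, (z : G) ⊓ h = c →
      d (z : G) + d h = d ((z : G) ⊔ h) + d c by
    exact H (g ⊓ h) inf_le_right ⟨g, inf_le_left⟩ rfl
  intro c hch z
  induction z using (hwf c).induction with
  | _ z IH =>
    intro hz
    by_cases hle : (z : G) ≤ h
    · have h1 : (z : G) ⊓ h = (z : G) := inf_eq_left.2 hle
      have h2 : (z : G) ⊔ h = h := sup_eq_right.2 hle
      rw [h2, h1.symm.trans hz]
      ring
    · -- c < z; pick a maximal element m with c ≤ m < z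
      have hcz : c < (z : G) :=
        lt_of_le_of_ne z.2 fun hceq => hle (inf_eq_left.1 (hz.trans hceq))
      obtain ⟨m, hmS, hmmax⟩ := hmax {y | c ≤ y ∧ y < (z : G)} c ⟨le_rfl, hcz⟩
        (z : G) (fun x hx => hx.2.le)
      obtain ⟨hcm, hmz⟩ := hmS
      have hcovm : m ⋖ (z : G) :=
        ⟨hmz, fun y hy1 hy2 => hmmax y ⟨hcm.trans hy1.le, hy2⟩ hy1⟩
      -- m ⊓ h = c
      have hmh : m ⊓ h = c := by
        refine le_antisymm ?_ (le_inf hcm hch)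
        calc m ⊓ h ≤ (z : G) ⊓ h := inf_le_inf_right h hmz.le
        _ = c := hz
      -- z ⊓ (m ⊔ h) = m
      have hmod : (z : G) ⊓ (m ⊔ h) = m := by
        rw [inf_comm, sup_inf_assoc_of_le h hmz.le, inf_comm h (z : G), hz,
          sup_eq_left.2 hcm]
      -- m ⊔ h ⋖ z ⊔ h
      have hcovsup : m ⊔ h ⋖ (z : G) ⊔ h := by
        have h3 : (z : G) ⊓ (m ⊔ h) ⋖ (z : G) := by rw [hmod]; exact hcovm
        have := covBy_sup_of_inf_covBy_left h3
        rwa [← sup_assoc, sup_eq_left.2 hmz.le] at this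
      -- apply induction hypothesis at m
      have hIH := IH ⟨m, hcm⟩ (Subtype.mk_lt_mk.2 hmz) hmh
      have e1 : d m = d (z : G) + 1 := hcov _ _ hcovm
      have e2 : d (m ⊔ h) = d ((z : G) ⊔ h) + 1 := hcov _ _ hcovsup
      simp only [e1, e2] at hIH
      omega
end

section
/- Let G be a modular noetherian right ℓ-group with strong order unit s, and let g ∈ G⁻ have right-normal factorization g = g_k g_{k-1} ⋯ g₁. Then the sequence of degrees deg(g_i) is non-increasing in i, i.e., deg(g_{i+1}) ≤ deg(g_i) for 1 ≤ i < k. -/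
section Aux

variable {G : Type*} [Lattice G]

/-- Any nonempty set bounded above has a maximal element, given the ACC. -/
lemma exists_maximal_aux
    (hacc : ∀ f : ℕ → G, Monotone f → (∃ h : G, ∀ n, f n ≤ h) → ∃ N, ∀ m, N ≤ m → f m = f N)
    (S : Set G) (b : G) (hb : ∀ t ∈ S, t ≤ b) (hne : S.Nonempty) :
    ∃ m ∈ S, ∀ t ∈ S, ¬ m < t := by
  by_contra hcon
  push_neg at hcon
  obtain ⟨x0, hx0⟩ := hne
  choose step hstep1 hstep2 using hcon
  let F : {x // x ∈ S} → {x // x ∈ S} := fun p => ⟨step p p.2, hstep1 p p.2⟩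
  let f : ℕ → {x // x ∈ S} := fun n => F^[n] ⟨x0, hx0⟩
  have hfs : ∀ n : ℕ, f (n + 1) = F (f n) := fun n => Function.iterate_succ_apply' F n _
  have hsucc : ∀ n, (f n : G) < f (n + 1) := fun n => by
    rw [hfs n]; exact hstep2 _ (f n).2
  have hmono : Monotone (fun n => (f n : G)) :=
    monotone_nat_of_le_succ (fun n => (hsucc n).le)
  obtain ⟨N, hN⟩ := hacc _ hmono ⟨b, fun n => hb _ (f n).2⟩
  exact absurd (hN (N + 1) (by omega)) (ne_of_gt (hsucc N))

/-- Any nonempty set bounded below has a minimal element, given the DCC. -/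
lemma exists_minimal_aux
    (hdcc : ∀ f : ℕ → G, Antitone f → (∃ h : G, ∀ n, h ≤ f n) → ∃ N, ∀ m, N ≤ m → f m = f N)
    (S : Set G) (b : G) (hb : ∀ t ∈ S, b ≤ t) (hne : S.Nonempty) :
    ∃ m ∈ S, ∀ t ∈ S, ¬ t < m := by
  by_contra hcon
  push_neg at hcon
  obtain ⟨x0, hx0⟩ := hne
  choose step hstep1 hstep2 using hcon
  let F : {x // x ∈ S} → {x // x ∈ S} := fun p => ⟨step p p.2, hstep1 p p.2⟩
  let f : ℕ → {x // x ∈ S} := fun n => F^[n] ⟨x0, hx0⟩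
  have hfs : ∀ n : ℕ, f (n + 1) = F (f n) := fun n => Function.iterate_succ_apply' F n _
  have hsucc : ∀ n, (f (n + 1) : G) < f n := fun n => by
    rw [hfs n]; exact hstep2 _ (f n).2
  have hmono : Antitone (fun n => (f n : G)) :=
    antitone_nat_of_succ_le (fun n => (hsucc n).le)
  obtain ⟨N, hN⟩ := hdcc _ hmono ⟨b, fun n => hb _ (f n).2⟩
  exact absurd (hN (N + 1) (by omega)) (ne_of_lt (hsucc N))

variable [Group G] [CovariantClass G G (Function.swap (· * ·)) (· ≤ ·)]

lemma mul_lt_mul_right_aux {a b : G} (c : G) (hab : a < b) : a * c < b * c :=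
  lt_of_le_of_ne (mul_le_mul_left hab.le c) (fun h => hab.ne (mul_right_cancel h))

lemma deg_one_aux (d : G → ℤ) (hd : ∀ a b : G, d (a * b) = d a + d b) : d (1 : G) = 0 := by
  have := hd 1 1; simp at this; omega

lemma deg_inv_aux (d : G → ℤ) (hd : ∀ a b : G, d (a * b) = d a + d b) (t : G) :
    d t⁻¹ = -d t := by
  have := hd t⁻¹ t
  rw [inv_mul_cancel, deg_one_aux d hd] at this
  omega

/-- Covers map to atoms of the negative cone: if `z ⋖ t` then `d z = d t + 1`. -/
lemma deg_covBy_aux (d : G → ℤ) (hd : ∀ a b : G, d (a * b) = d a + d b)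
    (hatom : ∀ x : G, x ⋖ 1 → d x = 1) {z t : G} (h : z ⋖ t) : d z = d t + 1 := by
  have hcov : z * t⁻¹ ⋖ 1 := by
    constructor
    · have := mul_lt_mul_right_aux t⁻¹ h.lt
      rwa [mul_inv_cancel] at this
    · intro w hw1 hw2
      have hz : z < w * t := by
        have := mul_lt_mul_right_aux t hw1
        rwa [inv_mul_cancel_right] at this
      have ht : w * t < t := by
        have := mul_lt_mul_right_aux t hw2
        rwa [one_mul] at this
      exact h.2 hz ht
  have h1 := hatom _ hcov
  rw [hd, deg_inv_aux d hd] at h1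
  omega

end Aux

section Deg

variable {G : Type*} [Lattice G] [Group G]
    [CovariantClass G G (Function.swap (· * ·)) (· ≤ ·)] [IsModularLattice G]

/-- The degree is antitone: `x ≤ y → d y ≤ d x`. -/
lemma deg_antitone_aux (hG : IsLatticeNoetherian G)
    (d : G → ℤ) (hd : ∀ a b : G, d (a * b) = d a + d b)
    (hatom : ∀ x : G, x ⋖ 1 → d x = 1) {x y : G} (hxy : x ≤ y) : d y ≤ d x := by
  by_contra hcon
  set T : Set G := {t | x ≤ t ∧ t ≤ y ∧ d t < d y} with hT
  have hxT : x ∈ T := ⟨le_refl x, hxy, by omega⟩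
  obtain ⟨m, hmT, hmax⟩ := exists_maximal_aux hG.1 T y (fun t ht => ht.2.1) ⟨x, hxT⟩
  have hmy : m < y := lt_of_le_of_ne hmT.2.1
    (fun h => by rw [h] at hmT; exact absurd hmT.2.2 (by omega))
  obtain ⟨z, hzS, hzmin⟩ := exists_minimal_aux hG.2 {w | m < w ∧ w ≤ y} m
    (fun t ht => ht.1.le) ⟨y, hmy, le_refl y⟩
  have hcov : m ⋖ z := ⟨hzS.1, fun w hw1 hw2 => hzmin w ⟨hw1, hw2.le.trans hzS.2⟩ hw2⟩
  have hdz : d m = d z + 1 := deg_covBy_aux d hd hatom hcov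
  have hznT : z ∉ T := fun hzT => hmax z hzT hzS.1
  have : ¬ d z < d y := fun h => hznT ⟨hmT.1.trans hzS.1.le, hzS.2, h⟩
  have := hmT.2.2
  omega

/-- The degree is a valuation: `d (x ⊔ y) + d (x ⊓ y) = d x + d y`. -/
lemma deg_valuation_aux (hG : IsLatticeNoetherian G)
    (d : G → ℤ) (hd : ∀ a b : G, d (a * b) = d a + d b)
    (hatom : ∀ x : G, x ⋖ 1 → d x = 1) (x y : G) :
    d (x ⊔ y) + d (x ⊓ y) = d x + d y := by
  by_contra hcon
  set T : Set G := {t | x ⊓ y ≤ t ∧ t ≤ x ∧ d (t ⊔ y) + d (x ⊓ y) ≠ d t + d y} with hT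
  have hxT : x ∈ T := ⟨inf_le_left, le_refl x, hcon⟩
  obtain ⟨t, htT, htmin⟩ := exists_minimal_aux hG.2 T (x ⊓ y) (fun w hw => hw.1) ⟨x, hxT⟩
  have hty : t ⊓ y = x ⊓ y :=
    le_antisymm (inf_le_inf_right y htT.2.1) (le_inf htT.1 inf_le_right)
  have htny : ¬ t ≤ y := by
    intro h
    have h1 : t ⊔ y = y := sup_eq_right.mpr h
    have h2 : t = x ⊓ y := by rw [← hty, inf_eq_left.mpr h]
    exact htT.2.2 (by rw [h1, h2, add_comm])
  have hlt : x ⊓ y < t := lt_of_le_of_ne htT.1 (fun h => htny (h ▸ inf_le_right))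
  obtain ⟨z, hzS, hzmax⟩ := exists_maximal_aux hG.1 {w | x ⊓ y ≤ w ∧ w < t} t
    (fun w hw => hw.2.le) ⟨x ⊓ y, le_refl _, hlt⟩
  have hcov : z ⋖ t := ⟨hzS.2, fun w hw1 hw2 => hzmax w ⟨hzS.1.trans hw1.le, hw2⟩ hw1⟩
  have hznT : z ∉ T := fun h => htmin z h hzS.2
  have hzval : d (z ⊔ y) + d (x ⊓ y) = d z + d y := by
    by_contra h
    exact hznT ⟨hzS.1, hzS.2.le.trans htT.2.1, h⟩
  -- `(z ⊔ y) ⊓ t = z` by modularity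
  have hkey : (z ⊔ y) ⊓ t = z := by
    rw [sup_inf_assoc_of_le y hcov.lt.le, inf_comm y t, hty]
    exact sup_eq_left.mpr hzS.1
  have hne : z ⊔ y ≠ t ⊔ y := by
    intro h
    have h2 : (z ⊔ y) ⊓ t = t := inf_eq_right.mpr (h ▸ le_sup_left)
    exact hcov.lt.ne' (by rw [← hkey, h2])
  have hcov2 : z ⊔ y ⋖ t ⊔ y := by
    refine ⟨lt_of_le_of_ne (sup_le_sup_right hcov.lt.le y) hne, ?_⟩
    intro w hw1 hw2
    have hztw : z ≤ t ⊓ w := le_inf hcov.lt.le (le_sup_left.trans hw1.le)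
    rcases hcov.eq_or_eq hztw inf_le_left with hcase | hcase
    · -- t ⊓ w = z forces w = z ⊔ y
      have hmod : (z ⊔ y ⊔ t) ⊓ w = (z ⊔ y) ⊔ t ⊓ w := sup_inf_assoc_of_le t hw1.le
      have hzyt : z ⊔ y ⊔ t = t ⊔ y := by
        rw [sup_comm z y, sup_assoc, sup_eq_right.mpr hcov.lt.le, sup_comm]
      rw [hzyt, inf_eq_right.mpr hw2.le, hcase, sup_eq_left.mpr le_sup_left] at hmod
      exact hw1.ne' hmod
    · -- t ⊓ w = t forces t ⊔ y ≤ w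
      have htw : t ≤ w := hcase ▸ inf_le_right
      exact absurd (sup_le htw (le_sup_right.trans hw1.le)) (not_le_of_gt hw2)
  have h1 : d z = d t + 1 := deg_covBy_aux d hd hatom hcov
  have h2 : d (z ⊔ y) = d (t ⊔ y) + 1 := deg_covBy_aux d hd hatom hcov2
  exact htT.2.2 (by omega)

end Deg

/-- In a modular noetherian right ℓ-group with strong order unit `s`, the degrees of the
right-normal factors `g_i = (g ⊔ s^{-i})(g ⊔ s^{-(i-1)})⁻¹` of `g ≤ 1` are
non-increasing: `deg g_{i+1} ≤ deg g_i` for `1 ≤ i < k`. -/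
theorem iota_is_nonincreasing {G : Type*} [Lattice G] [Group G]
    [CovariantClass G G (Function.swap (· * ·)) (· ≤ ·)] [IsModularLattice G]
    (hG : IsLatticeNoetherian G) (s : G) (hs : IsStrongOrderUnit s)
    (d : G → ℤ) (hd : ∀ a b : G, d (a * b) = d a + d b)
    (hatom : ∀ x : G, x ⋖ 1 → d x = 1)
    (g : G) (hg : g ≤ 1)
    (k : ℕ) (hk : s ^ (-(k : ℤ)) ≤ g) (hkmin : ∀ j : ℕ, j < k → ¬ s ^ (-(j : ℤ)) ≤ g) :
    ∀ i : ℕ, 1 ≤ i → i < k →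
      d ((g ⊔ s ^ (-(i : ℤ) - 1)) * (g ⊔ s ^ (-(i : ℤ)))⁻¹) ≤
        d ((g ⊔ s ^ (-(i : ℤ))) * (g ⊔ s ^ (-(i : ℤ) + 1))⁻¹) := by
  intro i _ _
  set n : ℤ := -(i : ℤ) with hn
  -- left multiplication by s⁻¹ distributes over joins
  have hsup : ∀ u v : G, s⁻¹ * (u ⊔ v) = s⁻¹ * u ⊔ s⁻¹ * v := by
    intro u v
    have h := (hs.2.1 (s⁻¹ * u) (s⁻¹ * v)).2
    rw [mul_inv_cancel_left, mul_inv_cancel_left] at h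
    rw [← h, inv_mul_cancel_left]
  have hsinv : s⁻¹ ≤ (1 : G) := by
    have := mul_le_mul_left hs.1.le s⁻¹
    rwa [one_mul, mul_inv_cancel] at this
  have hsg : s⁻¹ * g ≤ g := by
    have := mul_le_mul_left hsinv g
    rwa [one_mul] at this
  have hz1 : s ^ (n - 1) = s⁻¹ * s ^ n := by
    rw [← zpow_neg_one, ← zpow_add]; ring_nf
  have hz2 : s ^ n = s⁻¹ * s ^ (n + 1) := by
    rw [← zpow_neg_one, ← zpow_add]; ring_nf
  have hzle : s ^ (n - 1) ≤ s ^ n := by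
    rw [hz1]
    have := mul_le_mul_left hsinv (s ^ n)
    rwa [one_mul] at this
  set a : G := g ⊔ s ^ (n + 1) with ha
  set b : G := g ⊔ s ^ n with hb
  set c : G := g ⊔ s ^ (n - 1) with hc
  set w : G := s⁻¹ * a with hw
  have hwdef : w = s⁻¹ * g ⊔ s ^ n := by rw [hw, ha, hsup, ← hz2]
  have hwb : w ≤ b := by
    rw [hwdef, hb]
    exact sup_le (hsg.trans le_sup_left) le_sup_right
  have hcb : c ≤ b := by
    rw [hc, hb]
    exact sup_le le_sup_left (hzle.trans le_sup_right)
  have hcwb : c ⊔ w = b := by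
    apply le_antisymm (sup_le hcb hwb)
    rw [hb]
    exact sup_le (le_sup_left.trans le_sup_left)
      ((le_sup_right.trans (le_of_eq hwdef.symm)).trans le_sup_right)
  have hsb : s⁻¹ * b ≤ c ⊓ w := by
    have hsbdef : s⁻¹ * b = s⁻¹ * g ⊔ s ^ (n - 1) := by rw [hb, hsup, ← hz1]
    rw [hsbdef]
    refine le_inf ?_ ?_
    · rw [hc]; exact sup_le (hsg.trans le_sup_left) le_sup_right
    · rw [hwdef]; exact sup_le le_sup_left (hzle.trans le_sup_right)
  have hB : d (c ⊓ w) ≤ d (s⁻¹ * b) := deg_antitone_aux hG d hd hatom hsb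
  have hA : d (c ⊔ w) + d (c ⊓ w) = d c + d w := deg_valuation_aux hG d hd hatom c w
  rw [hcwb] at hA
  have e1 : d (s⁻¹ * b) = d s⁻¹ + d b := hd _ _
  have e2 : d w = d s⁻¹ + d a := hd _ _
  have goal1 : d (c * b⁻¹) = d c - d b := by rw [hd, deg_inv_aux d hd]; ring
  have goal2 : d (b * a⁻¹) = d b - d a := by rw [hd, deg_inv_aux d hd]; ring
  show d (c * b⁻¹) ≤ d (b * a⁻¹)
  rw [goal1, goal2]
  omega
end

section
/- Let G be a modular noetherian right ℓ-group with strong order unit s, and g ∈ G⁻. If g = g_k ⋯ g₁ is the right-normal and g = h₁ ⋯ h_k the left-normal factorization of g, then deg(h_i) = deg(g_i) for all 1 ≤ i ≤ k. -/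
/-- The join in the dual left-invariant order: `g ⋎ h = (g⁻¹ ⊓ h⁻¹)⁻¹`. -/
def cjoin {G : Type*} [Lattice G] [Group G] (g h : G) : G := (g⁻¹ ⊓ h⁻¹)⁻¹

section Aux

variable {G : Type*} [Lattice G] [Group G]
  [CovariantClass G G (Function.swap (· * ·)) (· ≤ ·)]

lemma aux_mul_covBy {x y : G} (h : x ⋖ y) (c : G) : x * c ⋖ y * c := by
  have := (apply_covBy_apply_iff (OrderIso.mulRight c)).2 h
  simpa using this

lemma aux_inf_mul (x y c : G) : (x ⊓ y) * c = x * c ⊓ y * c := by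
  simpa only [OrderIso.mulRight_apply] using (OrderIso.mulRight c).map_inf x y

lemma aux_normal_inv {s : G} (h : IsNormal s) : IsNormal s⁻¹ := by
  intro x y
  constructor
  · have := (h (s⁻¹ * x) (s⁻¹ * y)).1
    simp only [mul_inv_cancel_left] at this
    rw [← this, inv_mul_cancel_left]
  · have := (h (s⁻¹ * x) (s⁻¹ * y)).2
    simp only [mul_inv_cancel_left] at this
    rw [← this, inv_mul_cancel_left]

lemma aux_normal_mul {s t : G} (hs : IsNormal s) (ht : IsNormal t) : IsNormal (s * t) := by
  intro x y
  constructor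
  · rw [mul_assoc, (ht x y).1, (hs _ _).1, mul_assoc, mul_assoc]
  · rw [mul_assoc, (ht x y).2, (hs _ _).2, mul_assoc, mul_assoc]

lemma aux_normal_one : IsNormal (1 : G) := by intro x y; simp

lemma aux_normal_zpow {s : G} (h : IsNormal s) (n : ℤ) : IsNormal (s ^ n) := by
  induction n using Int.induction_on with
  | zero => simpa using aux_normal_one (G := G)
  | succ k ih => rw [zpow_add_one]; exact aux_normal_mul ih h
  | pred k ih => rw [zpow_sub_one]; exact aux_normal_mul ih (aux_normal_inv h)

lemma phi_const {G : Type*} [Lattice G] [Group G]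
    [CovariantClass G G (Function.swap (· * ·)) (· ≤ ·)] [IsModularLattice G]
    (hG : IsLatticeNoetherian G)
    (d : G → ℤ) (hd : ∀ a b : G, d (a * b) = d a + d b)
    (hatom : ∀ x : G, x ⋖ 1 → d x = 1)
    (a : G) {u v : G} (huv : u ≤ v) :
    d (u ⊓ a) + (d (u ⊔ a) - d u) = d (v ⊓ a) + (d (v ⊔ a) - d v) := by
  classical
  have d1 : d 1 = 0 := by have := hd 1 1; simp at this; omega
  have dinv : ∀ x : G, d x⁻¹ = - d x := by
    intro x; have := hd x x⁻¹; simp [d1] at this; omega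
  have covd : ∀ x y : G, x ⋖ y → d x = d y + 1 := by
    intro x y h
    have h2 : x * y⁻¹ ⋖ 1 := by simpa using aux_mul_covBy h y⁻¹
    have h3 := hatom _ h2
    rw [hd] at h3
    have := dinv y
    omega
  have diamond : ∀ x y : G, x ⋖ y →
      (x ⊓ a = y ⊓ a ∧ x ⊔ a ⋖ y ⊔ a) ∨ (x ⊓ a ⋖ y ⊓ a ∧ x ⊔ a = y ⊔ a) := by
    intro x y h
    by_cases hc : y ⊓ a ≤ x
    · left
      refine ⟨le_antisymm (inf_le_inf_right a h.lt.le) (le_inf hc inf_le_right), ?_⟩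
      have hm : (x ⊔ a) ⊓ y = x := by
        rw [sup_inf_assoc_of_le a h.lt.le]
        exact sup_eq_left.2 (le_trans (by rw [inf_comm]) hc)
      have hcov : (x ⊔ a) ⊓ y ⋖ y := by rw [hm]; exact h
      have := covBy_sup_of_inf_covBy_right hcov
      have he : (x ⊔ a) ⊔ y = y ⊔ a := by
        rw [sup_comm x a, sup_assoc, sup_eq_right.2 h.lt.le, sup_comm]
      rwa [he] at this
    · right
      have hy : x ⊔ (y ⊓ a) = y := by
        have h1 : x < x ⊔ (y ⊓ a) := left_lt_sup.2 hc
        have h2 : x ⊔ (y ⊓ a) ≤ y := sup_le h.lt.le inf_le_left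
        rcases h2.lt_or_eq with h3 | h3
        · exact absurd h3 (h.2 h1)
        · exact h3
      refine ⟨?_, le_antisymm (sup_le_sup_right h.lt.le a)
        (sup_le (hy ▸ sup_le le_sup_left (le_trans inf_le_right le_sup_right)) le_sup_right)⟩
      have hcov : x ⋖ x ⊔ (y ⊓ a) := by rw [hy]; exact h
      have := inf_covBy_of_covBy_sup_left hcov
      have he : x ⊓ (y ⊓ a) = x ⊓ a := by
        rw [← inf_assoc, inf_eq_left.2 h.lt.le]
      rwa [he] at this
  have covstep : ∀ x y : G, x ⋖ y →
      d (x ⊓ a) + (d (x ⊔ a) - d x) = d (y ⊓ a) + (d (y ⊔ a) - d y) := by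
    intro x y h
    have hxy := covd _ _ h
    rcases diamond x y h with ⟨he, hc⟩ | ⟨hc, he⟩
    · have := covd _ _ hc; rw [he]; omega
    · have := covd _ _ hc; rw [he]; omega
  -- existence of covers below v
  have exists_cover : ∀ x : G, x < v → ∃ w, x ⋖ w ∧ w ≤ v := by
    intro x hx
    by_contra hno
    push_neg at hno
    set S : Set G := {z | x < z ∧ z ≤ v} with hS
    have hvS : v ∈ S := ⟨hx, le_rfl⟩
    have step : ∀ z : S, ∃ z' : S, (z' : G) < z := by
      rintro ⟨z, hz1, hz2⟩
      have hnc : ¬ x ⋖ z := fun hcov => hno z hcov hz2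
      obtain ⟨c, hc1, hc2⟩ := exists_lt_lt_of_not_covBy hz1 hnc
      exact ⟨⟨c, hc1, hc2.le.trans hz2⟩, hc2⟩
    let f : ℕ → S := fun n => Nat.rec ⟨v, hvS⟩ (fun _ z => Classical.choose (step z)) n
    have hfd : ∀ n, f (n + 1) = Classical.choose (step (f n)) := fun n => rfl
    have hdec : ∀ n, (f (n + 1)).1 < (f n).1 := by
      intro n; rw [hfd n]; exact Classical.choose_spec (step (f n))
    have hanti : Antitone (fun n => (f n).1) := (strictAnti_nat_of_succ_lt hdec).antitone
    obtain ⟨N, hN⟩ := hG.2 (fun n => (f n).1) hanti ⟨x, fun n => (f n).2.1.le⟩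
    have := hdec N
    rw [hN (N + 1) (by omega)] at this
    exact lt_irrefl _ this
  -- the ascending chain from u to v
  have exists_step : ∀ x : G, ∃ w : G,
      (x < v → (x ⋖ w ∧ w ≤ v)) ∧ (¬ x < v → w = x) := by
    intro x
    by_cases hx : x < v
    · obtain ⟨w, hw⟩ := exists_cover x hx
      exact ⟨w, fun _ => hw, fun h => absurd hx h⟩
    · exact ⟨x, fun h => absurd h hx, fun _ => rfl⟩
  let f : ℕ → G := fun n => Nat.rec u (fun _ x => Classical.choose (exists_step x)) n
  have hfs : ∀ n, f (n + 1) = Classical.choose (exists_step (f n)) := fun n => rfl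
  have hle : ∀ n, f n ≤ v := by
    intro n
    induction n with
    | zero => exact huv
    | succ m ih =>
      rw [hfs m]
      rcases Classical.em (f m < v) with hx | hx
      · exact ((Classical.choose_spec (exists_step (f m))).1 hx).2
      · rw [(Classical.choose_spec (exists_step (f m))).2 hx]; exact ih
  have hmono : Monotone f := by
    apply monotone_nat_of_le_succ
    intro n
    rw [hfs n]
    rcases Classical.em (f n < v) with hx | hx
    · exact ((Classical.choose_spec (exists_step (f n))).1 hx).1.lt.le
    · rw [(Classical.choose_spec (exists_step (f n))).2 hx]
  have hphi : ∀ n, d (u ⊓ a) + (d (u ⊔ a) - d u) = d (f n ⊓ a) + (d (f n ⊔ a) - d (f n)) := by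
    intro n
    induction n with
    | zero => rfl
    | succ m ih =>
      rw [hfs m]
      rcases Classical.em (f m < v) with hx | hx
      · rw [ih]
        exact covstep _ _ ((Classical.choose_spec (exists_step (f m))).1 hx).1
      · rw [(Classical.choose_spec (exists_step (f m))).2 hx]; exact ih
  obtain ⟨N, hN⟩ := hG.1 f hmono ⟨v, hle⟩
  have hfv : f N = v := by
    rcases (hle N).lt_or_eq with h | h
    · exfalso
      have h1 := ((Classical.choose_spec (exists_step (f N))).1 h).1.lt
      rw [← hfs N, hN (N + 1) (by omega)] at h1
      exact lt_irrefl _ h1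
    · exact h
  rw [hphi N, hfv]

end Aux

/-- In a modular noetherian right ℓ-group with strong order unit `s`, the right-normal
factors `g_i = (g ⊔ s^{-i})(g ⊔ s^{-(i-1)})⁻¹` and the left-normal factors
`h_i = (g ⋎ s^{-(i-1)})⁻¹ (g ⋎ s^{-i})` of `g ≤ 1` have equal degrees. -/
theorem left_right_symmetry_of_degrees {G : Type*} [Lattice G] [Group G]
    [CovariantClass G G (Function.swap (· * ·)) (· ≤ ·)] [IsModularLattice G]
    (hG : IsLatticeNoetherian G) (s : G) (hs : IsStrongOrderUnit s)
    (d : G → ℤ) (hd : ∀ a b : G, d (a * b) = d a + d b)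
    (hatom : ∀ x : G, x ⋖ 1 → d x = 1)
    (g : G) (hg : g ≤ 1)
    (k : ℕ) (hk : s ^ (-(k : ℤ)) ≤ g) (hkmin : ∀ j : ℕ, j < k → ¬ s ^ (-(j : ℤ)) ≤ g) :
    ∀ i : ℕ, 1 ≤ i → i ≤ k →
      d ((cjoin g (s ^ (-(i : ℤ) + 1)))⁻¹ * cjoin g (s ^ (-(i : ℤ)))) =
        d ((g ⊔ s ^ (-(i : ℤ))) * (g ⊔ s ^ (-(i : ℤ) + 1))⁻¹) := by
  intro i _ _
  obtain ⟨hs1, hsn, -⟩ := hs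
  have d1 : d 1 = 0 := by have := hd 1 1; simp at this; omega
  have dinv : ∀ x : G, d x⁻¹ = - d x := by
    intro x; have := hd x x⁻¹; simp [d1] at this; omega
  set j : ℤ := (i : ℤ) with hj
  set a : G := s ^ j * g with ha
  -- rewrite the left side
  have hinv1 : (s ^ (-j + 1))⁻¹ = s ^ (j - 1) := by
    rw [← zpow_neg]; congr 1; ring
  have hinv2 : (s ^ (-j))⁻¹ = s ^ j := by rw [← zpow_neg, neg_neg]
  have hL : (cjoin g (s ^ (-j + 1)))⁻¹ * cjoin g (s ^ (-j))
      = (g⁻¹ ⊓ s ^ (j - 1)) * (g⁻¹ ⊓ s ^ j)⁻¹ := by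
    rw [cjoin, cjoin, hinv1, hinv2, inv_inv]
  -- degree computations
  have hpow : s * s ^ (j - 1) = s ^ j := by
    rw [← zpow_one_add]; congr 1; ring
  have hA : s * ((g⁻¹ ⊓ s ^ (j - 1)) * g) = s ⊓ a := by
    rw [aux_inf_mul, inv_mul_cancel, (hsn 1 (s ^ (j - 1) * g)).1, mul_one, ha,
      ← mul_assoc, hpow]
  have hB : (g⁻¹ ⊓ s ^ j) * g = 1 ⊓ a := by
    rw [aux_inf_mul, inv_mul_cancel, ha]
  have hdA : d (g⁻¹ ⊓ s ^ (j - 1)) = d (s ⊓ a) - d s - d g := by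
    have := congrArg d hA
    rw [hd, hd] at this
    omega
  have hdB : d (g⁻¹ ⊓ s ^ j) = d (1 ⊓ a) - d g := by
    have := congrArg d hB
    rw [hd] at this
    omega
  -- right side
  have hsj := aux_normal_zpow hsn j
  have hC : s ^ j * (g ⊔ s ^ (-j)) = a ⊔ 1 := by
    rw [(hsj g (s ^ (-j))).2, ha, zpow_neg, mul_inv_cancel]
  have hD : s ^ j * (g ⊔ s ^ (-j + 1)) = a ⊔ s := by
    rw [(hsj g (s ^ (-j + 1))).2, ha, ← zpow_add,
      show j + (-j + 1) = 1 by ring, zpow_one]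
  have hdC : d (g ⊔ s ^ (-j)) = d (a ⊔ 1) - d (s ^ j) := by
    have := congrArg d hC; rw [hd] at this; omega
  have hdD : d (g ⊔ s ^ (-j + 1)) = d (a ⊔ s) - d (s ^ j) := by
    have := congrArg d hD; rw [hd] at this; omega
  have key := phi_const hG d hd hatom a (le_of_lt hs1)
  rw [hL, hd, hd, dinv, dinv, hdA, hdB, hdC, hdD]
  rw [sup_comm (1:G) a, sup_comm s a] at key
  omega
end

section
/- Let G be a modular noetherian right ℓ-group with s^{-1} = ⋀ X(G⁻) a strong order unit. Then an element g ∈ G⁻ is meet-irreducible in G⁻ if and only if the interval [g, e] is a chain. -/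
/-- From the descending chain condition (bounded below) we get minimal elements of any
nonempty bounded-below set. -/
lemma IsLatticeNoetherian.exists_minimal {G : Type*} [Lattice G]
    (hG : IsLatticeNoetherian G) (S : Set G) (b : G) (hb : ∀ x ∈ S, b ≤ x)
    (hne : S.Nonempty) : ∃ m ∈ S, ∀ x ∈ S, ¬ x < m := by
  by_contra h
  push_neg at h
  obtain ⟨a₀, ha₀⟩ := hne
  have h' : ∀ m : {x // x ∈ S}, ∃ x : {x // x ∈ S}, (x : G) < m := by
    rintro ⟨m, hm⟩
    obtain ⟨x, hx, hlt⟩ := h m hm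
    exact ⟨⟨x, hx⟩, hlt⟩
  choose F hF using h'
  set f : ℕ → {x // x ∈ S} := fun n => F^[n] ⟨a₀, ha₀⟩ with hf
  have hstep : ∀ n, (f (n + 1) : G) < f n := by
    intro n
    have : f (n + 1) = F (f n) := by
      simp only [hf, Function.iterate_succ_apply']
    rw [this]
    exact hF (f n)
  have hanti : Antitone fun n => (f n : G) :=
    antitone_nat_of_succ_le fun n => (hstep n).le
  obtain ⟨N, hN⟩ := hG.2 (fun n => (f n : G)) hanti ⟨b, fun n => hb _ (f n).2⟩
  exact (hstep N).ne (hN (N + 1) (by omega))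

/-- From the ascending chain condition (bounded above) we get maximal elements of any
nonempty bounded-above set. -/
lemma IsLatticeNoetherian.exists_maximal {G : Type*} [Lattice G]
    (hG : IsLatticeNoetherian G) (S : Set G) (b : G) (hb : ∀ x ∈ S, x ≤ b)
    (hne : S.Nonempty) : ∃ m ∈ S, ∀ x ∈ S, ¬ m < x := by
  by_contra h
  push_neg at h
  obtain ⟨a₀, ha₀⟩ := hne
  have h' : ∀ m : {x // x ∈ S}, ∃ x : {x // x ∈ S}, (m : G) < x := by
    rintro ⟨m, hm⟩
    obtain ⟨x, hx, hlt⟩ := h m hm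
    exact ⟨⟨x, hx⟩, hlt⟩
  choose F hF using h'
  set f : ℕ → {x // x ∈ S} := fun n => F^[n] ⟨a₀, ha₀⟩ with hf
  have hstep : ∀ n, (f n : G) < f (n + 1) := by
    intro n
    have : f (n + 1) = F (f n) := by
      simp only [hf, Function.iterate_succ_apply']
    rw [this]
    exact hF (f n)
  have hmono : Monotone fun n => (f n : G) :=
    monotone_nat_of_le_succ fun n => (hstep n).le
  obtain ⟨N, hN⟩ := hG.1 (fun n => (f n : G)) hmono ⟨b, fun n => hb _ (f n).2⟩
  exact (hstep N).ne' (hN (N + 1) (by omega))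

/-- Existence of a cover above a strictly smaller element. -/
lemma IsLatticeNoetherian.exists_covBy_above {G : Type*} [Lattice G]
    (hG : IsLatticeNoetherian G) {p q : G} (h : p < q) : ∃ r, p ⋖ r ∧ r ≤ q := by
  obtain ⟨m, hm, hmin⟩ := hG.exists_minimal {y | p < y ∧ y ≤ q} p
    (fun x hx => hx.1.le) ⟨q, h, le_rfl⟩
  refine ⟨m, ⟨hm.1, fun z hz1 hz2 => ?_⟩, hm.2⟩
  exact hmin z ⟨hz1, hz2.le.trans hm.2⟩ hz2

/-- Existence of a cover below a strictly larger element. -/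
lemma IsLatticeNoetherian.exists_covBy_below {G : Type*} [Lattice G]
    (hG : IsLatticeNoetherian G) {p q : G} (h : p < q) : ∃ r, p ≤ r ∧ r ⋖ q := by
  obtain ⟨m, hm, hmax⟩ := hG.exists_maximal {y | p ≤ y ∧ y < q} q
    (fun x hx => hx.2.le) ⟨p, le_rfl, h⟩
  refine ⟨m, hm.1, ⟨hm.2, fun z hz1 hz2 => ?_⟩⟩
  exact hmax z ⟨hm.1.trans hz1.le, hz2⟩ hz1

/-- In a modular noetherian right ℓ-group with `s⁻¹ = ⋀ X(G⁻)` a strong order unit,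
`g ≤ 1` is meet-irreducible in the negative cone iff the interval `[g, 1]` is a chain. -/
theorem meet_irreducibles_are_chains {G : Type*} [Lattice G] [Group G]
    [CovariantClass G G (Function.swap (· * ·)) (· ≤ ·)] [IsModularLattice G]
    (hG : IsLatticeNoetherian G) (s : G)
    (hglb : IsGLB {x : G | x ⋖ 1} s⁻¹) (hs : IsStrongOrderUnit s)
    (g : G) (hg : g ≤ 1) :
    (∀ a b : G, a ≤ 1 → b ≤ 1 → g = a ⊓ b → g = a ∨ g = b) ↔
      IsChain (· ≤ ·) (Set.Icc g (1 : G)) := by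
  obtain ⟨hs1, hsnorm, _⟩ := hs
  -- Basic right-translation tools
  have hle_iff : ∀ a b c : G, a * c ≤ b * c ↔ a ≤ b := fun a b c =>
    (OrderIso.mulRight c).le_iff_le
  have hinfmul : ∀ a b c : G, (a ⊓ b) * c = a * c ⊓ b * c := fun a b c =>
    (OrderIso.mulRight c).map_inf a b
  have hsupmul : ∀ a b c : G, (a ⊔ b) * c = a * c ⊔ b * c := fun a b c =>
    (OrderIso.mulRight c).map_sup a b
  have hcovmul : ∀ a b c : G, a ⋖ b → a * c ⋖ b * c := fun a b c h =>
    (apply_covBy_apply_iff (OrderIso.mulRight c)).2 h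
  -- Left multiplication by s and s⁻¹
  have hSinf : ∀ x y : G, s * (x ⊓ y) = s * x ⊓ s * y := fun x y => (hsnorm x y).1
  have hIinf : ∀ x y : G, s⁻¹ * (x ⊓ y) = s⁻¹ * x ⊓ s⁻¹ * y := by
    intro x y
    have h1 : s * (s⁻¹ * x ⊓ s⁻¹ * y) = x ⊓ y := by
      rw [hSinf, mul_inv_cancel_left, mul_inv_cancel_left]
    rw [← h1, inv_mul_cancel_left]
  have hSmono : ∀ {x y : G}, x ≤ y → s * x ≤ s * y := by
    intro x y h
    have : s * x = s * (x ⊓ y) := by rw [inf_eq_left.2 h]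
    rw [this, hSinf]
    exact inf_le_right
  have hImono : ∀ {x y : G}, x ≤ y → s⁻¹ * x ≤ s⁻¹ * y := by
    intro x y h
    have : s⁻¹ * x = s⁻¹ * (x ⊓ y) := by rw [inf_eq_left.2 h]
    rw [this, hIinf]
    exact inf_le_right
  have hIle1 : s⁻¹ ≤ (1 : G) := by
    have := (hle_iff s⁻¹ 1 s).1
    simp only [inv_mul_cancel, one_mul] at this
    exact this hs1.le
  have hIley : ∀ y : G, s⁻¹ * y ≤ y := by
    intro y
    have := (hle_iff s⁻¹ 1 y).2 hIle1
    simpa using this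
  -- cover property : u ⋖ v → s⁻¹ * v ≤ u
  have hcov_s : ∀ u v : G, u ⋖ v → s⁻¹ * v ≤ u := by
    intro u v h
    have h2 : u * v⁻¹ ⋖ 1 := by
      have := hcovmul u v v⁻¹ h
      rwa [mul_inv_cancel] at this
    have h3 : s⁻¹ ≤ u * v⁻¹ := hglb.1 h2
    have h4 := mul_le_mul_left h3 v
    rwa [inv_mul_cancel_right] at h4
  -- complements in [s⁻¹, 1]
  have hcomp : ∀ a : G, s⁻¹ ≤ a → a ≤ 1 →
      ∃ z, s⁻¹ ≤ z ∧ z ≤ 1 ∧ a ⊓ z = s⁻¹ ∧ a ⊔ z = 1 := by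
    intro a ha1 ha2
    obtain ⟨z, hz, hzmin⟩ := hG.exists_minimal {z | s⁻¹ ≤ z ∧ z ≤ 1 ∧ a ⊔ z = 1} s⁻¹
      (fun x hx => hx.1) ⟨1, hIle1, le_rfl, sup_eq_right.2 ha2⟩
    refine ⟨z, hz.1, hz.2.1, ?_, hz.2.2⟩
    by_contra hne
    have hnle : ¬ a ⊓ z ≤ s⁻¹ := fun hle => hne (le_antisymm hle (le_inf ha1 hz.1))
    have hex : ∃ c, c ⋖ 1 ∧ ¬ a ⊓ z ≤ c := by
      by_contra hc
      push_neg at hc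
      exact hnle (hglb.2 fun c hcm => hc c hcm)
    obtain ⟨c, hc1, hc2⟩ := hex
    have hsc : s⁻¹ ≤ c := hglb.1 hc1
    have hzc_lt : z ⊓ c < z :=
      lt_of_le_of_ne inf_le_left fun he => hc2 (le_trans inf_le_right (inf_eq_left.1 he))
    have hsup1 : (a ⊓ z) ⊔ c = 1 := by
      have hlt : c < (a ⊓ z) ⊔ c := lt_of_le_of_ne le_sup_right fun he =>
        hc2 (le_sup_left.trans he.ge)
      have hle1 : (a ⊓ z) ⊔ c ≤ 1 := sup_le (inf_le_left.trans ha2) hc1.1.le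
      rcases lt_or_eq_of_le hle1 with h | h
      · exact absurd h (hc1.2 hlt)
      · exact h
    have hzeq : (a ⊓ z) ⊔ c ⊓ z = z := by
      have := sup_inf_assoc_of_le c (inf_le_right : a ⊓ z ≤ z)
      rw [hsup1] at this
      rw [← this, inf_eq_right.2 hz.2.1]
    have hsupz : a ⊔ z ⊓ c = 1 := by
      apply le_antisymm (sup_le ha2 (inf_le_left.trans hz.2.1))
      have hzle : z ≤ a ⊔ z ⊓ c := by
        conv_lhs => rw [← hzeq]
        exact sup_le_sup inf_le_left (le_of_eq (inf_comm c z))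
      calc (1 : G) = a ⊔ z := hz.2.2.symm
        _ ≤ a ⊔ (a ⊔ z ⊓ c) := sup_le_sup_left hzle a
        _ = a ⊔ z ⊓ c := by rw [← sup_assoc, sup_idem]
    exact hzmin (z ⊓ c) ⟨le_inf hz.1 hsc, inf_le_left.trans hz.2.1, hsupz⟩ hzc_lt
  -- transported complements in [s⁻¹ * t, t]
  have hcompT : ∀ t v : G, s⁻¹ * t ≤ v → v ≤ t →
      ∃ z, v ⊓ z = s⁻¹ * t ∧ v ⊔ z = t ∧ s⁻¹ * t ≤ z ∧ z ≤ t := by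
    intro t v h1 h2
    have ha1 : s⁻¹ ≤ v * t⁻¹ := by
      rw [← hle_iff _ _ t, inv_mul_cancel_right]
      exact h1
    have ha2 : v * t⁻¹ ≤ 1 := by
      rw [← hle_iff _ _ t, inv_mul_cancel_right, one_mul]
      exact h2
    obtain ⟨z₀, hz1, hz2, hz3, hz4⟩ := hcomp (v * t⁻¹) ha1 ha2
    refine ⟨z₀ * t, ?_, ?_, ?_, ?_⟩
    · have : (v * t⁻¹ ⊓ z₀) * t = s⁻¹ * t := by rw [hz3]
      rwa [hinfmul, inv_mul_cancel_right] at this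
    · have : (v * t⁻¹ ⊔ z₀) * t = 1 * t := by rw [hz4]
      rwa [hsupmul, inv_mul_cancel_right, one_mul] at this
    · exact mul_le_mul_left hz1 t
    · have := mul_le_mul_left hz2 t
      rwa [one_mul] at this
  -- crux lemma
  have hcrux : ∀ v' v p q : G, v' ⋖ v → v ≤ 1 →
      (∀ r, v' ⋖ r → r ≤ 1 → r = v) → v ⋖ p → v ⋖ q → p ≤ 1 → q ≤ 1 → p ≠ q → False := by
    intro v' v p q hvv hv1 huniq hvp hvq hp1 hq1 hpq
    have hIv : s⁻¹ * v ≤ v' := hcov_s v' v hvv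
    have hvsv' : v ≤ s * v' := by
      have := hSmono hIv
      rwa [mul_inv_cancel_left] at this
    have hv'le1 : v' ≤ 1 := hvv.1.le.trans hv1
    have hv'lesv' : v' ≤ s * v' := by
      have := hSmono (hIley v')
      rwa [mul_inv_cancel_left] at this
    -- Step 1: s * v' ⊓ 1 = v
    have hx : s * v' ⊓ 1 = v := by
      have hIt : s⁻¹ * (s * v') ≤ v := by
        rw [inv_mul_cancel_left]
        exact hvv.1.le
      obtain ⟨z, hz1, hz2, hz3, hz4⟩ := hcompT (s * v') v hIt hvsv'
      rw [inv_mul_cancel_left] at hz1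
      by_contra hne
      have hvx : v ≤ s * v' ⊓ 1 := le_inf hvsv' hv1
      have hvltx : v < s * v' ⊓ 1 := lt_of_le_of_ne hvx fun h => hne h.symm
      set x := s * v' ⊓ 1 with hxdef
      set z' := z ⊓ x with hz'def
      have hv'x : v' ≤ x := le_inf hv'lesv' hv'le1
      have hvz' : v ⊓ z' = v' := by
        rw [hz'def, ← inf_assoc, hz1, inf_eq_left.2 hv'x]
      have hsupz' : v ⊔ z' = x := by
        have := sup_inf_assoc_of_le z (hvx : v ≤ x)
        rw [hz2] at this
        rw [hz'def, ← this, hxdef, inf_eq_right.2 (inf_le_left : s * v' ⊓ 1 ≤ s * v')]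
      have hz'gt : v' < z' := by
        have hle : v' ≤ z' := by rw [← hvz']; exact inf_le_right
        rcases lt_or_eq_of_le hle with h | h
        · exact h
        · exfalso
          apply hvltx.ne
          rw [← hsupz', ← h, sup_eq_left.2 hvv.1.le]
      obtain ⟨r, hr1, hr2⟩ := hG.exists_covBy_above hz'gt
      have hrv : r = v := huniq r hr1
        (hr2.trans ((inf_le_right : z ⊓ x ≤ x).trans (inf_le_right : s * v' ⊓ 1 ≤ 1)))
      have hvlez' : v ≤ z' := hrv ▸ hr2
      have : v = v' := by rw [← hvz', inf_eq_left.2 hvlez']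
      exact hvv.1.ne' this
    -- Step 2
    have hsv : s⁻¹ * v = v' ⊓ s⁻¹ := by
      rw [← hx, hIinf, inv_mul_cancel_left, mul_one]
    set w := s⁻¹ ⊓ v with hwdef
    have hspw : s⁻¹ * p ≤ w := by
      refine le_inf ?_ (hcov_s v p hvp)
      have := hImono hp1
      rwa [mul_one] at this
    have hsqw : s⁻¹ * q ≤ w := by
      refine le_inf ?_ (hcov_s v q hvq)
      have := hImono hq1
      rwa [mul_one] at this
    have hv'w : v' ⊓ w = s⁻¹ * v := by
      rw [hwdef, ← inf_assoc, inf_comm v' s⁻¹, inf_assoc, inf_eq_left.2 hvv.1.le, hsv,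
        inf_comm]
    set A := s⁻¹ * p ⊔ v' with hAdef
    have hAw : A ⊓ w = s⁻¹ * p := by
      rw [hAdef, sup_inf_assoc_of_le v' hspw, hv'w, sup_eq_left.2 (hImono hvp.1.le)]
    have hmemA : A = v' ∨ A = v := by
      have h1 : v' ≤ A := le_sup_right
      have h2 : A ≤ v := sup_le (hcov_s v p hvp) hvv.1.le
      rcases lt_or_eq_of_le h1 with h1' | h1'
      · rcases lt_or_eq_of_le h2 with h2' | h2'
        · exact absurd h2' (hvv.2 h1')
        · exact Or.inr h2'
      · exact Or.inl h1'.symm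
    rcases hmemA with hA | hA
    · -- A = v' : s⁻¹p = s⁻¹v, so p = v, contradiction
      have : s⁻¹ * p = s⁻¹ * v := by rw [← hAw, hA, hv'w]
      exact hvp.1.ne (mul_left_cancel this).symm
    · -- A = v : w = s⁻¹p, so s⁻¹q ≤ s⁻¹p, so q ≤ p, so q = p
      have hwv : v ⊓ w = w := inf_eq_right.2 (inf_le_right : w ≤ v)
      have hweq : w = s⁻¹ * p := by rw [← hAw, hA, hwv]
      have hqlep : q ≤ p := by
        have h1 : s⁻¹ * q ≤ s⁻¹ * p := hweq ▸ hsqw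
        have := hSmono h1
        rwa [mul_inv_cancel_left, mul_inv_cancel_left] at this
      rcases lt_or_eq_of_le hqlep with h | h
      · exact hvp.2 hvq.1 h
      · exact hpq h.symm
  constructor
  · -- meet-irreducible → chain
    intro hirr
    by_contra hnc
    unfold IsChain Set.Pairwise at hnc
    push_neg at hnc
    obtain ⟨a, ha, b, hb, hab, hnab⟩ := hnc
    have hnab1 : ¬ a ≤ b := fun h => hnab.1 h
    have hnab2 : ¬ b ≤ a := fun h => hnab.2 h
    set S : Set G :=
      {m | g ≤ m ∧ m ≤ 1 ∧ ∃ p q, m ⋖ p ∧ m ⋖ q ∧ p ≤ 1 ∧ q ≤ 1 ∧ p ≠ q} with hSdef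
    have hSne : S.Nonempty := by
      have h1 : a ⊓ b < a :=
        lt_of_le_of_ne inf_le_left fun h => hnab1 (inf_eq_left.1 h)
      have h2 : a ⊓ b < b :=
        lt_of_le_of_ne inf_le_right fun h => hnab2 (inf_eq_right.1 h)
      obtain ⟨p, hp, hpa⟩ := hG.exists_covBy_above h1
      obtain ⟨q, hq, hqb⟩ := hG.exists_covBy_above h2
      have hpq : p ≠ q := by
        intro he
        exact hp.1.not_ge (le_inf hpa (he ▸ hqb))
      exact ⟨a ⊓ b, le_inf ha.1 hb.1, inf_le_left.trans ha.2, p, q, hp, hq,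
        hpa.trans ha.2, hqb.trans hb.2, hpq⟩
    obtain ⟨v, hvS, hvmin⟩ := hG.exists_minimal S g (fun x hx => hx.1) hSne
    obtain ⟨hgv, hv1, p, q, hvp, hvq, hp1, hq1, hpq⟩ := hvS
    rcases lt_or_eq_of_le hgv with hgvlt | hgveq
    · -- g < v : descend to a smaller element of S or use the crux lemma
      obtain ⟨v', hv'1, hv'2⟩ := hG.exists_covBy_below hgvlt
      by_cases hr : ∃ r, v' ⋖ r ∧ r ≤ 1 ∧ r ≠ v
      · obtain ⟨r, h1, h2, h3⟩ := hr
        have hv'S : v' ∈ S :=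
          ⟨hv'1, hv'2.1.le.trans hv1, v, r, hv'2, h1, hv1, h2, Ne.symm h3⟩
        exact hvmin v' hv'S hv'2.1
      · push_neg at hr
        exact hcrux v' v p q hv'2 hv1 (fun r h1 h2 => hr r h1 h2) hvp hvq hp1 hq1 hpq
    · -- v = g : contradiction with meet-irreducibility
      subst hgveq
      have hpqinf : p ⊓ q = g := by
        have hle : g ≤ p ⊓ q := le_inf hvp.1.le hvq.1.le
        rcases lt_or_eq_of_le hle with h | h
        · exfalso
          have hlt : p ⊓ q < p := by
            refine lt_of_le_of_ne inf_le_left fun he => ?_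
            have hplq : p ≤ q := inf_eq_left.1 he
            rcases lt_or_eq_of_le hplq with h' | h'
            · exact hvq.2 hvp.1 h'
            · exact hpq h'
          exact hvp.2 h hlt
        · exact h.symm
      rcases hirr p q hp1 hq1 hpqinf.symm with h | h
      · exact hvp.1.ne h
      · exact hvq.1.ne h
  · -- chain → meet-irreducible
    intro hchain a b ha1 hb1 hab
    by_cases he : a = b
    · left
      rw [hab, he, inf_idem]
    · have ha : a ∈ Set.Icc g 1 := ⟨hab.le.trans inf_le_left, ha1⟩
      have hb : b ∈ Set.Icc g 1 := ⟨hab.le.trans inf_le_right, hb1⟩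
      rcases hchain ha hb he with h | h
      · left
        rw [hab, inf_eq_left.2 h]
      · right
        rw [hab, inf_eq_right.2 h]
end
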